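/- arXiv:2305.15656 — 3 statements merged into one kernel-verified Lean document; each statement's English description precedes it below -/
import Mathlib

section
/- Let A be an abelian category and F : A → A a right exact additive endofunctor. Then the right trivial extension category A ⋉ F, whose objects are pairs (X, f) with f : F(X) → X satisfying f ∘ F(f) = 0 and whose morphisms (X, α) → (Y, β) are morphisms γ : X → Y with γ ∘ α = β ∘ F(γ), is an abelian category. -/
open CategoryTheory

variable (A : Type u) [Category.{v} A] [Abelian A] (F : A ⥤ A)

/-- The right trivial extension `A ⋉ F`: objects are pairs `(X, f : F(X) ⟶ X)` with
`f ∘ F(f) = 0`. -/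
structure RightTrivExt where
  X : A
  f : F.obj X ⟶ X
  cond : F.map f ≫ f = 0

instance : Category (RightTrivExt A F) where
  Hom P Q := {γ : P.X ⟶ Q.X // F.map γ ≫ Q.f = P.f ≫ γ}
  id P := ⟨𝟙 P.X, by simp⟩
  comp {P Q S} φ ψ := ⟨φ.1 ≫ ψ.1, by
    rw [F.map_comp, Category.assoc, ψ.2, ← Category.assoc, φ.2, Category.assoc]⟩
  id_comp φ := Subtype.ext (Category.id_comp _)
  comp_id φ := Subtype.ext (Category.comp_id _)
  assoc φ ψ χ := Subtype.ext (Category.assoc _ _ _)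

namespace RightTrivExt

open CategoryTheory.Limits ZeroObject

variable {A F}

@[ext]
lemma hom_ext {P Q : RightTrivExt A F} {φ ψ : P ⟶ Q} (h : φ.1 = ψ.1) : φ = ψ :=
  Subtype.ext h

@[simp] lemma comp_val {P Q R : RightTrivExt A F} (φ : P ⟶ Q) (ψ : Q ⟶ R) :
    (φ ≫ ψ).1 = φ.1 ≫ ψ.1 := rfl

@[simp] lemma id_val (P : RightTrivExt A F) : (𝟙 P : P ⟶ P).1 = 𝟙 P.X := rfl

section Additive

variable [F.Additive]

/-- The homs of the trivial extension form an additive subgroup of the homs of `A`. -/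
def homAddSubgroup (P Q : RightTrivExt A F) : AddSubgroup (P.X ⟶ Q.X) where
  carrier := {γ | F.map γ ≫ Q.f = P.f ≫ γ}
  add_mem' {γ δ} hγ hδ := by
    simp only [Set.mem_setOf_eq] at *
    simp [Preadditive.add_comp, Preadditive.comp_add, hγ, hδ]
  zero_mem' := by simp
  neg_mem' {γ} hγ := by
    simp only [Set.mem_setOf_eq] at *
    simp [hγ]

instance homAddCommGroup (P Q : RightTrivExt A F) : AddCommGroup (P ⟶ Q) :=
  inferInstanceAs (AddCommGroup (homAddSubgroup P Q))

@[simp] lemma zero_val (P Q : RightTrivExt A F) : (0 : P ⟶ Q).1 = 0 := rfl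

@[simp] lemma add_val {P Q : RightTrivExt A F} (φ ψ : P ⟶ Q) :
    (φ + ψ).1 = φ.1 + ψ.1 := rfl

instance : Preadditive (RightTrivExt A F) where
  add_comp _ _ _ φ ψ χ := hom_ext (Preadditive.add_comp _ _ _ _ _ _)
  comp_add _ _ _ φ ψ χ := hom_ext (Preadditive.comp_add _ _ _ _ _ _)

lemma val_comp_eq_zero {P Q R : RightTrivExt A F} {g : P ⟶ Q} {φ : Q ⟶ R} (h : g ≫ φ = 0) :
    g.1 ≫ φ.1 = 0 := congrArg Subtype.val h

/-- The zero object of `A ⋉ F`. -/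
noncomputable def zeroObj : RightTrivExt A F where
  X := 0
  f := 0
  cond := by simp

instance : HasZeroObject (RightTrivExt A F) where
  zero := by
    refine ⟨zeroObj, ?_, ?_⟩
    · intro P
      exact ⟨⟨⟨0, by simp⟩⟩, fun φ => hom_ext (by apply (isZero_zero A).eq_of_src)⟩
    · intro P
      exact ⟨⟨⟨0, by simp⟩⟩, fun φ => hom_ext (by apply (isZero_zero A).eq_of_tgt)⟩

section Prod

variable (P Q : RightTrivExt A F)

/-- The product of two objects of `A ⋉ F`. -/
@[simps]
noncomputable def prodObj : RightTrivExt A F where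
  X := P.X ⊞ Q.X
  f := biprod.lift (F.map biprod.fst ≫ P.f) (F.map biprod.snd ≫ Q.f)
  cond := by
    apply biprod.hom_ext
    · rw [Category.assoc, biprod.lift_fst, zero_comp, ← Category.assoc, ← F.map_comp,
        biprod.lift_fst, F.map_comp, Category.assoc, P.cond, comp_zero]
    · rw [Category.assoc, biprod.lift_snd, zero_comp, ← Category.assoc, ← F.map_comp,
        biprod.lift_snd, F.map_comp, Category.assoc, Q.cond, comp_zero]

/-- First projection. -/
@[simps]
noncomputable def prodFst : prodObj P Q ⟶ P :=
  ⟨biprod.fst, by exact (biprod.lift_fst _ _).symm⟩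

/-- Second projection. -/
@[simps]
noncomputable def prodSnd : prodObj P Q ⟶ Q :=
  ⟨biprod.snd, by exact (biprod.lift_snd _ _).symm⟩

/-- Lift into the product. -/
@[simps]
noncomputable def prodLift {Z : RightTrivExt A F} (ψ₁ : Z ⟶ P) (ψ₂ : Z ⟶ Q) :
    Z ⟶ prodObj P Q :=
  ⟨biprod.lift ψ₁.1 ψ₂.1, by
    apply biprod.hom_ext
    · simp only [Category.assoc, biprod.lift_fst, prodObj_f]
      erw [Category.assoc, Category.assoc, biprod.lift_fst, biprod.lift_fst, ← Category.assoc, ← F.map_comp, biprod.lift_fst, ψ₁.2]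
    · simp only [Category.assoc, biprod.lift_snd, prodObj_f]
      erw [Category.assoc, Category.assoc, biprod.lift_snd, biprod.lift_snd, ← Category.assoc, ← F.map_comp, biprod.lift_snd, ψ₂.2]⟩

/-- The product cone is a limit. -/
noncomputable def prodIsLimit :
    IsLimit (BinaryFan.mk (prodFst P Q) (prodSnd P Q)) :=
  BinaryFan.isLimitMk (fun s => prodLift P Q s.fst s.snd)
    (fun s => hom_ext (biprod.lift_fst _ _))
    (fun s => hom_ext (biprod.lift_snd _ _))
    (fun s m h₁ h₂ => hom_ext (by
      apply biprod.hom_ext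
      · erw [prodLift_coe, biprod.lift_fst]
        exact congrArg Subtype.val h₁
      · erw [prodLift_coe, biprod.lift_snd]
        exact congrArg Subtype.val h₂))

instance : HasBinaryProducts (RightTrivExt A F) := by
  have : ∀ {X Y : RightTrivExt A F}, HasLimit (pair X Y) := fun {X Y} =>
    HasLimit.mk ⟨_, prodIsLimit X Y⟩
  exact hasBinaryProducts_of_hasLimit_pair _

instance : HasFiniteProducts (RightTrivExt A F) :=
  hasFiniteProducts_of_has_binary_and_terminal

end Prod

section Kernel

variable {P Q : RightTrivExt A F} (φ : P ⟶ Q)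

/-- The kernel object of a morphism in `A ⋉ F`. -/
@[simps]
noncomputable def kerObj : RightTrivExt A F where
  X := kernel φ.1
  f := kernel.lift φ.1 (F.map (kernel.ι φ.1) ≫ P.f) (by
    rw [Category.assoc, ← φ.2, ← Category.assoc, ← F.map_comp, kernel.condition,
      F.map_zero, zero_comp])
  cond := by
    apply zero_of_comp_mono (kernel.ι φ.1)
    rw [Category.assoc, kernel.lift_ι, ← Category.assoc, ← F.map_comp, kernel.lift_ι,
      F.map_comp, Category.assoc, P.cond, comp_zero]

/-- The kernel inclusion. -/
@[simps]
noncomputable def kerι : kerObj φ ⟶ P :=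
  ⟨kernel.ι φ.1, (kernel.lift_ι _ _ _).symm⟩

lemma kerι_comp : kerι φ ≫ φ = 0 := hom_ext (kernel.condition φ.1)

/-- The lift to the kernel. -/
@[simps]
noncomputable def kerLift {W : RightTrivExt A F} (g : W ⟶ P) (hg : g ≫ φ = 0) :
    W ⟶ kerObj φ :=
  ⟨kernel.lift φ.1 g.1 (val_comp_eq_zero hg), by
    refine (cancel_mono (kernel.ι φ.1)).1 ?_
    show (F.map (kernel.lift φ.1 g.1 (val_comp_eq_zero hg)) ≫ kernel.lift φ.1 (F.map (kernel.ι φ.1) ≫ P.f) _) ≫ kernel.ι φ.1 = (W.f ≫ kernel.lift φ.1 g.1 (val_comp_eq_zero hg)) ≫ kernel.ι φ.1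
    simp only [Category.assoc, kerObj_f, kernel.lift_ι]
    rw [← Category.assoc, ← F.map_comp, kernel.lift_ι, g.2]⟩

lemma kerLift_comp {W : RightTrivExt A F} (g : W ⟶ P) (hg : g ≫ φ = 0) :
    kerLift φ g hg ≫ kerι φ = g :=
  hom_ext (kernel.lift_ι _ _ _)

/-- The kernel fork is a limit. -/
noncomputable def kerIsLimit : IsLimit (KernelFork.ofι (kerι φ) (kerι_comp φ)) :=
  KernelFork.IsLimit.ofι _ _ (fun g hg => kerLift φ g hg)
    (fun g hg => kerLift_comp φ g hg)
    (fun g hg m hm => hom_ext (by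
      refine (cancel_mono (kernel.ι φ.1)).1 ?_
      have h1 := congrArg Subtype.val hm
      simp only [comp_val, kerι_coe] at h1
      rw [kerLift_coe, kernel.lift_ι]; exact h1))

instance : HasKernels (RightTrivExt A F) where
  has_limit φ := HasLimit.mk ⟨_, kerIsLimit φ⟩

end Kernel

end Additive

section Cokernel

variable [F.Additive] [PreservesFiniteColimits F]
variable {P Q : RightTrivExt A F} (φ : P ⟶ Q)

lemma cokW : F.map φ.1 ≫ (Q.f ≫ cokernel.π φ.1) = 0 := by
  rw [← Category.assoc, φ.2, Category.assoc, cokernel.condition, comp_zero]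

/-- The structure map of the cokernel object. -/
noncomputable def cokf : F.obj (cokernel φ.1) ⟶ cokernel φ.1 :=
  (isColimitOfHasCokernelOfPreservesColimit F φ.1).desc
    (CokernelCofork.ofπ (Q.f ≫ cokernel.π φ.1) (cokW φ))

lemma cokf_fac : F.map (cokernel.π φ.1) ≫ cokf φ = Q.f ≫ cokernel.π φ.1 := by
  exact (isColimitOfHasCokernelOfPreservesColimit F φ.1).fac
    (CokernelCofork.ofπ (Q.f ≫ cokernel.π φ.1) (cokW φ)) WalkingParallelPair.one

/-- The cokernel object of a morphism in `A ⋉ F`. -/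
@[simps]
noncomputable def cokObj : RightTrivExt A F where
  X := cokernel φ.1
  f := cokf φ
  cond := by
    haveI : Epi (F.map (F.map (cokernel.π φ.1))) := F.map_epi _
    apply zero_of_epi_comp (F.map (F.map (cokernel.π φ.1)))
    rw [← Category.assoc, ← F.map_comp, cokf_fac, F.map_comp, Category.assoc, cokf_fac,
      ← Category.assoc, Q.cond, zero_comp]

/-- The cokernel projection. -/
@[simps]
noncomputable def cokπ : Q ⟶ cokObj φ :=
  ⟨cokernel.π φ.1, cokf_fac φ⟩

lemma comp_cokπ : φ ≫ cokπ φ = 0 := hom_ext (cokernel.condition φ.1)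

/-- The descent from the cokernel. -/
@[simps]
noncomputable def cokDesc {Z : RightTrivExt A F} (g : Q ⟶ Z) (hg : φ ≫ g = 0) :
    cokObj φ ⟶ Z :=
  ⟨cokernel.desc φ.1 g.1 (val_comp_eq_zero hg), by
    haveI : Epi (F.map (cokernel.π φ.1)) := F.map_epi _
    refine (cancel_epi (F.map (cokernel.π φ.1))).1 ?_
    simp only [cokObj_f]
    show F.map (cokernel.π φ.1) ≫ F.map (cokernel.desc φ.1 g.1 (val_comp_eq_zero hg)) ≫ Z.f = F.map (cokernel.π φ.1) ≫ cokf φ ≫ cokernel.desc φ.1 g.1 (val_comp_eq_zero hg)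
    rw [← Category.assoc, ← F.map_comp, cokernel.π_desc, g.2, ← Category.assoc,
      cokf_fac, Category.assoc, cokernel.π_desc]⟩

lemma cokπ_comp {Z : RightTrivExt A F} (g : Q ⟶ Z) (hg : φ ≫ g = 0) :
    cokπ φ ≫ cokDesc φ g hg = g :=
  hom_ext (cokernel.π_desc _ _ _)

/-- The cokernel cofork is a colimit. -/
noncomputable def cokIsColimit : IsColimit (CokernelCofork.ofπ (cokπ φ) (comp_cokπ φ)) :=
  CokernelCofork.IsColimit.ofπ _ _ (fun g hg => cokDesc φ g hg)
    (fun g hg => cokπ_comp φ g hg)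
    (fun g hg m hm => hom_ext (by
      refine (cancel_epi (cokernel.π φ.1)).1 ?_
      have h1 := congrArg Subtype.val hm
      simp only [comp_val, cokπ_coe] at h1
      rw [cokDesc_coe, cokernel.π_desc]; exact h1))

instance : HasCokernels (RightTrivExt A F) where
  has_colimit φ := HasColimit.mk ⟨_, cokIsColimit φ⟩

lemma mono_val [Mono φ] : Mono φ.1 := by
  have h : kerι φ ≫ φ = (0 : kerObj φ ⟶ P) ≫ φ := by
    rw [kerι_comp, zero_comp]
  have h2 := congrArg Subtype.val ((cancel_mono φ).mp h)
  simp only [comp_val, zero_val] at h2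
  exact Abelian.mono_of_kernel_ι_eq_zero _ h2

lemma epi_val [Epi φ] : Epi φ.1 := by
  have h : φ ≫ cokπ φ = φ ≫ (0 : Q ⟶ cokObj φ) := by
    rw [comp_cokπ, comp_zero]
  have h2 := congrArg Subtype.val ((cancel_epi φ).mp h)
  simp only [comp_val, zero_val] at h2
  exact Abelian.epi_of_cokernel_π_eq_zero _ h2

/-- Every mono in `A ⋉ F` is normal. -/
noncomputable def normalMono [Mono φ] : NormalMono φ := by
  haveI : Mono φ.1 := mono_val φ
  refine ⟨cokObj φ, cokπ φ, comp_cokπ φ, ?_⟩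
  have hφ : IsLimit (KernelFork.ofι φ.1 (cokernel.condition φ.1)) :=
    Abelian.monoIsKernelOfCokernel (CokernelCofork.ofπ (cokernel.π φ.1) (cokernel.condition φ.1)) (cokernelIsCokernel φ.1)
  refine KernelFork.IsLimit.ofι _ _ ?_ ?_ ?_
  · intro W ψ hψ
    refine ⟨hφ.lift (KernelFork.ofι ψ.1 (congrArg Subtype.val hψ)), ?_⟩
    have fac : hφ.lift (KernelFork.ofι ψ.1 (congrArg Subtype.val hψ)) ≫ φ.1 = ψ.1 :=
      hφ.fac _ WalkingParallelPair.zero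
    refine (cancel_mono φ.1).1 ?_
    rw [Category.assoc, ← φ.2, ← Category.assoc, ← F.map_comp, fac, ψ.2,
      Category.assoc, fac]
  · intro W ψ hψ
    exact hom_ext (hφ.fac (KernelFork.ofι ψ.1 (congrArg Subtype.val hψ)) WalkingParallelPair.zero)
  · intro W ψ hψ m hm
    apply hom_ext
    refine (cancel_mono φ.1).1 ?_
    have h1 := congrArg Subtype.val hm
    simp only [comp_val] at h1
    rw [h1]
    exact (hφ.fac (KernelFork.ofι ψ.1 (congrArg Subtype.val hψ)) WalkingParallelPair.zero).symm

/-- Every epi in `A ⋉ F` is normal. -/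
noncomputable def normalEpi [Epi φ] : NormalEpi φ := by
  haveI : Epi φ.1 := epi_val φ
  refine ⟨kerObj φ, kerι φ, kerι_comp φ, ?_⟩
  have hφ : IsColimit (CokernelCofork.ofπ φ.1 (kernel.condition φ.1)) :=
    Abelian.epiIsCokernelOfKernel (KernelFork.ofι (kernel.ι φ.1) (kernel.condition φ.1)) (kernelIsKernel φ.1)
  refine CokernelCofork.IsColimit.ofπ _ _ ?_ ?_ ?_
  · intro Z ψ hψ
    refine ⟨hφ.desc (CokernelCofork.ofπ ψ.1 (congrArg Subtype.val hψ)), ?_⟩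
    have fac : φ.1 ≫ hφ.desc (CokernelCofork.ofπ ψ.1 (congrArg Subtype.val hψ)) = ψ.1 :=
      hφ.fac _ WalkingParallelPair.one
    haveI : Epi (F.map φ.1) := F.map_epi _
    refine (cancel_epi (F.map φ.1)).1 ?_
    rw [← Category.assoc, ← F.map_comp, fac, ψ.2, ← Category.assoc, φ.2]
    simp only [Category.assoc]
    rw [fac]
  · intro Z ψ hψ
    exact hom_ext (hφ.fac (CokernelCofork.ofπ ψ.1 (congrArg Subtype.val hψ)) WalkingParallelPair.one)
  · intro Z ψ hψ m hm
    apply hom_ext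
    refine (cancel_epi φ.1).1 ?_
    have h1 := congrArg Subtype.val hm
    simp only [comp_val] at h1
    rw [h1]
    exact (hφ.fac (CokernelCofork.ofπ ψ.1 (congrArg Subtype.val hψ)) WalkingParallelPair.one).symm

noncomputable instance : IsNormalMonoCategory (RightTrivExt A F) where
  normalMonoOfMono φ _ := ⟨normalMono φ⟩

noncomputable instance : IsNormalEpiCategory (RightTrivExt A F) where
  normalEpiOfEpi φ _ := ⟨normalEpi φ⟩

end Cokernel

end RightTrivExt

/-- If `A` is abelian and `F : A ⥤ A` is a right exact additive endofunctor, then the right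
trivial extension category `A ⋉ F` is abelian. -/
theorem stmt_2 [F.Additive] [Limits.PreservesFiniteColimits F] :
    Nonempty (Abelian (RightTrivExt A F)) := by
  exact ⟨{ toPreadditive := inferInstance,
           toIsNormalMonoCategory := inferInstance,
           toIsNormalEpiCategory := inferInstance }⟩
end

section
/- Let R be a ring with M = R as an R-R-bimodule, and let [Y, β] be a left R ⋉ R-module, i.e. an R-module Y with an endomorphism β satisfying β² = 0. If the sequence Y →β Y →β Y is exact and ker(β) is a Gorenstein injective left R-module, then [Y, β] is a Gorenstein injective left R ⋉ R-module. -/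
open TensorProduct

/-- A complete projective resolution: an exact complex of projective `S`-modules
that stays exact under `Hom_S(-, Q)` for every projective `Q`. -/
structure IsCompleteProjectiveResolution (S : Type) [Ring S]
    (C : CochainComplex (ModuleCat.{0} S) ℤ) : Prop where
  projective : ∀ n : ℤ, Module.Projective S (C.X n)
  exact : ∀ n : ℤ, Function.Exact ⇑(C.d (n-1) n) ⇑(C.d n (n+1))
  homExact : ∀ (Q : ModuleCat.{0} S), Module.Projective S Q → ∀ (n : ℤ) (g : C.X n ⟶ Q),
    (g.hom : C.X n →ₗ[S] Q).comp (C.d (n-1) n).hom = 0 →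
      ∃ h : C.X (n+1) →ₗ[S] Q, h.comp (C.d n (n+1)).hom = g.hom

/-- Gorenstein projective module: a kernel of a differential in a complete
projective resolution. -/
def IsGorensteinProjective (S : Type) [Ring S] (G : Type) [AddCommGroup G]
    [Module S G] : Prop :=
  ∃ C : CochainComplex (ModuleCat.{0} S) ℤ, IsCompleteProjectiveResolution S C ∧
    Nonempty (G ≃ₗ[S] LinearMap.ker (C.d 0 1).hom)

structure IsCompleteInjectiveResolution (S : Type) [Ring S]
    (C : CochainComplex (ModuleCat.{0} S) ℤ) : Prop where
  injective : ∀ n : ℤ, Module.Injective S (C.X n)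
  exact : ∀ n : ℤ, Function.Exact ⇑(C.d (n-1) n) ⇑(C.d n (n+1))
  homExact : ∀ (Q : ModuleCat.{0} S), Module.Injective S Q → ∀ (n : ℤ) (g : Q →ₗ[S] C.X n),
    ((C.d n (n+1)).hom : C.X n →ₗ[S] C.X (n+1)).comp g = 0 →
      ∃ h : Q →ₗ[S] C.X (n-1), ((C.d (n-1) n).hom : C.X (n-1) →ₗ[S] C.X n).comp h = g

def IsGorensteinInjective (S : Type) [Ring S] (G : Type) [AddCommGroup G]
    [Module S G] : Prop :=
  ∃ C : CochainComplex (ModuleCat.{0} S) ℤ, IsCompleteInjectiveResolution S C ∧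
    Nonempty (G ≃ₗ[S] LinearMap.ker (C.d 0 1).hom)

/-- The `R ⋉ R`-module structure corresponding to an `R`-module `X` with an endomorphism
`α` satisfying `α² = 0`. -/
def epsModule {R X : Type} [Ring R] [AddCommGroup X] [Module R X]
    (α : X →ₗ[R] X) (hα : α ∘ₗ α = 0) : Module (TrivSqZeroExt R R) X where
  smul a x := a.fst • x + a.snd • α x
  one_smul x := by
    show (1 : TrivSqZeroExt R R).fst • x + (1 : TrivSqZeroExt R R).snd • α x = x
    simp
  mul_smul a b x := by
    show (a * b).fst • x + (a * b).snd • α x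
      = a.fst • (b.fst • x + b.snd • α x) + a.snd • α (b.fst • x + b.snd • α x)
    have h0 : α (α x) = 0 := by
      have := congrArg (fun f => f x) hα; simpa using this
    simp only [TrivSqZeroExt.fst_mul, TrivSqZeroExt.snd_mul, map_add, map_smul, h0,
      smul_zero, add_zero, smul_add, smul_smul, MulOpposite.smul_eq_mul_unop,
      MulOpposite.unop_op, add_smul, smul_eq_mul]
    abel
  smul_zero a := by
    show a.fst • (0 : X) + a.snd • α 0 = 0
    simp
  smul_add a x y := by
    show a.fst • (x + y) + a.snd • α (x + y)
      = (a.fst • x + a.snd • α x) + (a.fst • y + a.snd • α y)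
    rw [map_add, smul_add, smul_add]
    abel
  add_smul a b x := by
    show (a + b).fst • x + (a + b).snd • α x
      = (a.fst • x + a.snd • α x) + (b.fst • x + b.snd • α x)
    rw [TrivSqZeroExt.fst_add, TrivSqZeroExt.snd_add, add_smul, add_smul]
    abel
  zero_smul x := by
    show (0 : TrivSqZeroExt R R).fst • x + (0 : TrivSqZeroExt R R).snd • α x = 0
    simp

section Helpers

variable {R : Type} [Ring R]

local notation "S" => TrivSqZeroExt R R
local notation "ε" => (TrivSqZeroExt.inr 1 : TrivSqZeroExt R R)

theorem epsModule_smul {X : Type} [AddCommGroup X] [Module R X]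
    (α : X →ₗ[R] X) (hα : α ∘ₗ α = 0) (s : S) (x : X) :
    (letI := epsModule α hα; s • x) = s.fst • x + s.snd • α x := rfl

/-- S-linear map from an R-linear map commuting with the two square-zero endos. -/
def epsHom {X X' : Type} [AddCommGroup X] [Module R X] [AddCommGroup X'] [Module R X']
    (α : X →ₗ[R] X) (hα : α ∘ₗ α = 0) (α' : X' →ₗ[R] X') (hα' : α' ∘ₗ α' = 0)
    (F : X →ₗ[R] X') (hF : ∀ x, F (α x) = α' (F x)) :
    letI := epsModule α hα
    letI := epsModule α' hα'
    X →ₗ[S] X' :=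
  letI := epsModule α hα
  letI := epsModule α' hα'
  { toFun := F
    map_add' := F.map_add
    map_smul' := by
      intro s x
      show F (s.fst • x + s.snd • α x) = s.fst • F x + s.snd • α' (F x)
      rw [map_add, map_smul, map_smul, hF] }

theorem epsHom_apply {X X' : Type} [AddCommGroup X] [Module R X] [AddCommGroup X'] [Module R X']
    (α : X →ₗ[R] X) (hα : α ∘ₗ α = 0) (α' : X' →ₗ[R] X') (hα' : α' ∘ₗ α' = 0)
    (F : X →ₗ[R] X') (hF : ∀ x, F (α x) = α' (F x)) (x : X) :
    epsHom α hα α' hα' F hF x = F x := rfl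

theorem eps_mul_eq (s : S) : ε * s = TrivSqZeroExt.inr s.fst := by
  nth_rewrite 1 [← TrivSqZeroExt.inl_fst_add_inr_snd_eq s]
  rw [mul_add, TrivSqZeroExt.inr_mul_inr, TrivSqZeroExt.inr_mul_inl, add_zero]
  simp [op_smul_eq_mul]

theorem mul_eps_eq (s : S) : s * ε = TrivSqZeroExt.inr s.fst := by
  nth_rewrite 1 [← TrivSqZeroExt.inl_fst_add_inr_snd_eq s]
  rw [add_mul, TrivSqZeroExt.inr_mul_inr, TrivSqZeroExt.inl_mul_inr, add_zero]
  simp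

theorem eps_mul_eps : (ε * ε : S) = 0 := by simp

end Helpers
section Restrict

variable {R : Type} [Ring R]

local notation "S" => TrivSqZeroExt R R
local notation "ε" => (TrivSqZeroExt.inr 1 : TrivSqZeroExt R R)

/-- Restriction of scalars along `R →+* R ⋉ R`. -/
def resModule (Q : Type) [AddCommGroup Q] [Module S Q] : Module R Q :=
  Module.compHom Q (TrivSqZeroExt.inlHom R R)

theorem resModule_smul {Q : Type} [AddCommGroup Q] [Module S Q] (r : R) (q : Q) :
    (letI : Module R Q := resModule Q; r • q) = (TrivSqZeroExt.inl r : S) • q := rfl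

theorem smul_decomp {Q : Type} [AddCommGroup Q] [Module S Q] (s : S) (q : Q) :
    s • q = (TrivSqZeroExt.inl s.fst : S) • q
      + (TrivSqZeroExt.inl s.snd : S) • ((ε : S) • q) := by
  rw [← mul_smul, TrivSqZeroExt.inl_mul_inr]
  nth_rewrite 1 [← TrivSqZeroExt.inl_fst_add_inr_snd_eq s]
  rw [add_smul, smul_eq_mul, mul_one]

/-- The action of `ε` as an `R`-linear endomorphism of a restricted module. -/
def nu (Q : Type) [AddCommGroup Q] [Module S Q] :
    letI : Module R Q := resModule Q
    Q →ₗ[R] Q :=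
  letI : Module R Q := resModule Q
  { toFun := fun q => (ε : S) • q
    map_add' := fun a b => smul_add _ a b
    map_smul' := by
      intro r q
      show (ε : S) • ((TrivSqZeroExt.inl r : S) • q) = (TrivSqZeroExt.inl r : S) • ((ε:S) • q)
      rw [← mul_smul, ← mul_smul, eps_mul_eq, mul_eps_eq] }

theorem nu_nu {Q : Type} [AddCommGroup Q] [Module S Q] (q : Q) :
    nu (R := R) Q (nu (R := R) Q q) = 0 := by
  show (ε : S) • ((ε : S) • q) = 0
  rw [← mul_smul, eps_mul_eps, zero_smul]

end Restrict
section RestrictInj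

variable {R : Type} [Ring R]

local notation "S" => TrivSqZeroExt R R
local notation "ε" => (TrivSqZeroExt.inr 1 : TrivSqZeroExt R R)

theorem injective_of_equiv {M N : Type} [AddCommGroup M] [Module R M]
    [AddCommGroup N] [Module R N] (e : M ≃ₗ[R] N) (h : Module.Injective R M) :
    Module.Injective R N := by
  constructor
  intro A B _ _ _ _ f hf g
  obtain ⟨h', hh⟩ := h.out f hf (e.symm.toLinearMap ∘ₗ g)
  refine ⟨e.toLinearMap ∘ₗ h', fun x => ?_⟩
  simp only [LinearMap.comp_apply, LinearEquiv.coe_coe] at hh ⊢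
  rw [hh x, LinearEquiv.apply_symm_apply]

theorem eps_inl_comm (r : R) : (ε : S) * TrivSqZeroExt.inl r = TrivSqZeroExt.inl r * ε := by
  rw [eps_mul_eq, mul_eps_eq, TrivSqZeroExt.fst_inl]

/-- Restriction of scalars of an injective `R ⋉ R`-module is injective over `R`. -/
theorem res_injective (Q : Type) [AddCommGroup Q] [Module S Q]
    (hQ : Module.Injective S Q) :
    letI : Module R Q := resModule Q
    Module.Injective R Q := by
  letI : Module R Q := resModule Q
  constructor
  intro A B _ _ _ _ F hF φ
  set αA : A × A →ₗ[R] A × A := (LinearMap.inr R A A) ∘ₗ (LinearMap.fst R A A) with hαA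
  set αB : B × B →ₗ[R] B × B := (LinearMap.inr R B B) ∘ₗ (LinearMap.fst R B B) with hαB
  have hA : αA ∘ₗ αA = 0 := by
    apply LinearMap.ext; intro x; simp [hαA]
  have hB : αB ∘ₗ αB = 0 := by
    apply LinearMap.ext; intro x; simp [hαB]
  letI iA : Module S (A × A) := epsModule αA hA
  letI iB : Module S (B × B) := epsModule αB hB
  have hcomm : ∀ x : A × A, (F.prodMap F) (αA x) = αB ((F.prodMap F) x) := by
    intro x; simp [hαA, hαB]
  set FF : (A × A) →ₗ[S] (B × B) := epsHom αA hA αB hB (F.prodMap F) hcomm with hFF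
  have hFFinj : Function.Injective FF := by
    intro x y hxy
    have h1 : F x.1 = F y.1 := congrArg Prod.fst hxy
    have h2 : F x.2 = F y.2 := congrArg Prod.snd hxy
    exact Prod.ext (hF h1) (hF h2)
  set ΦA : (A × A) →ₗ[S] Q :=
    { toFun := fun a => φ a.1 + (ε : S) • (φ a.2)
      map_add' := by
        intro a b
        simp only [Prod.fst_add, Prod.snd_add, map_add, smul_add]
        abel
      map_smul' := by
        intro s a
        show φ (s.fst • a.1 + s.snd • (αA a).1) + (ε:S) • φ (s.fst • a.2 + s.snd • (αA a).2)
          = s • (φ a.1 + (ε:S) • φ a.2)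
        have hφ : ∀ (r : R) (x : A), φ (r • x) = (TrivSqZeroExt.inl r : S) • φ x :=
          fun r x => φ.map_smul r x
        simp only [hαA, LinearMap.comp_apply, LinearMap.fst_apply, LinearMap.inr_apply,
          map_add, hφ, map_zero, smul_zero, add_zero, smul_add]
        rw [smul_decomp (s := s) (q := φ a.1), smul_decomp (s := s) (q := (ε:S) • φ a.2)]
        simp only [← mul_smul, eps_mul_eps, eps_mul_eq, mul_eps_eq, TrivSqZeroExt.fst_inl,
          TrivSqZeroExt.fst_inr, TrivSqZeroExt.inr_zero, mul_zero, zero_smul, smul_zero, add_zero]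
        abel } with hΦA
  obtain ⟨Ψ, hΨ⟩ := hQ.out FF hFFinj ΦA
  have hB0 : ∀ (r : R) (b : B), ((r • b, (0:B)) : B × B) = (TrivSqZeroExt.inl r : S) • (b, 0) := by
    intro r b
    rw [epsModule_smul αB hB]
    simp [hαB]
  refine ⟨{ toFun := fun b => Ψ (b, 0)
            map_add' := by
              intro b b'
              show Ψ (b + b', 0) = Ψ (b, 0) + Ψ (b', 0)
              rw [show ((b + b', (0:B)) : B × B) = (b, 0) + (b', 0) by simp, map_add]
            map_smul' := by
              intro r b
              show Ψ (r • b, 0) = (TrivSqZeroExt.inl r : S) • Ψ (b, 0)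
              rw [hB0, map_smul] }, ?_⟩
  intro a
  show Ψ (F a, 0) = φ a
  have : ((F a, (0:B)) : B × B) = FF (a, 0) := by
    simp [hFF, epsHom_apply]
  rw [this, hΨ]
  show φ a + (ε:S) • φ 0 = φ a
  simp

/-- Every element of `ker ν` on an injective module lies in the range of `ν`. -/
theorem nu_surjOn_ker (Q : Type) [AddCommGroup Q] [Module S Q]
    (hQ : Module.Injective S Q) (q : Q) (hq : (ε : S) • q = 0) :
    ∃ p : Q, (ε : S) • p = q := by
  set m : S →ₗ[S] S :=
    { toFun := fun s => s * ε
      map_add' := fun a b => add_mul a b ε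
      map_smul' := fun s t => mul_assoc s t ε } with hm
  set ρ : S →ₗ[S] Q := LinearMap.toSpanSingleton S Q q with hρ
  have hker : LinearMap.ker m ≤ LinearMap.ker ρ := by
    intro s hs
    rw [LinearMap.mem_ker] at hs ⊢
    have h1 : s.fst = 0 := by
      have := congrArg TrivSqZeroExt.snd (show s * ε = 0 from hs)
      simpa [mul_eps_eq] using this
    show s • q = 0
    rw [smul_decomp, h1, hq, smul_zero, add_zero]
    simp
  set g : ↥(LinearMap.range m) →ₗ[S] Q :=
    ((LinearMap.ker m).liftQ ρ hker) ∘ₗ (m.quotKerEquivRange.symm : ↥(LinearMap.range m) →ₗ[S] (S ⧸ LinearMap.ker m)) with hg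
  obtain ⟨h, hh⟩ := hQ.out (LinearMap.range m).subtype (Submodule.injective_subtype _) g
  refine ⟨h 1, ?_⟩
  have h1 : (ε : S) • h 1 = h ((ε : S) • (1:S)) := (map_smul h (ε:S) 1).symm
  have h2 : (ε : S) • (1 : S) = m 1 := by
    show (ε : S) * 1 = (1 : S) * ε
    rw [mul_one, one_mul]
  rw [h1, h2]
  have h3 : m 1 = (LinearMap.range m).subtype ⟨m 1, LinearMap.mem_range_self m 1⟩ := rfl
  rw [h3, hh]
  show ((LinearMap.ker m).liftQ ρ hker) (m.quotKerEquivRange.symm ⟨m 1, _⟩) = q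
  rw [LinearMap.quotKerEquivRange_symm_apply_image]
  show ρ 1 = q
  simp [hρ]

end RestrictInj
section KerNu

variable {R : Type} [Ring R]

local notation "S" => TrivSqZeroExt R R
local notation "ε" => (TrivSqZeroExt.inr 1 : TrivSqZeroExt R R)

theorem ker_nu_injective (Q : Type) [AddCommGroup Q] [Module S Q]
    (hQ : Module.Injective S Q) :
    letI : Module R Q := resModule Q
    Module.Injective R ↥(LinearMap.ker (nu (R := R) Q)) := by
  letI : Module R Q := resModule Q
  constructor
  intro A B _ _ _ _ F hF g
  have h0A : (0 : A →ₗ[R] A) ∘ₗ (0 : A →ₗ[R] A) = 0 := by simp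
  have h0B : (0 : B →ₗ[R] B) ∘ₗ (0 : B →ₗ[R] B) = 0 := by simp
  letI iA : Module S A := epsModule 0 h0A
  letI iB : Module S B := epsModule 0 h0B
  have heps : ∀ b : B, (ε : S) • b = 0 := by
    intro b
    rw [epsModule_smul (0 : B →ₗ[R] B) h0B]
    simp
  have hepsA : ∀ a : A, (ε : S) • a = 0 := by
    intro a
    rw [epsModule_smul (0 : A →ₗ[R] A) h0A]
    simp
  have hinlA : ∀ (r : R) (a : A), (TrivSqZeroExt.inl r : S) • a = r • a := by
    intro r a
    rw [epsModule_smul (0 : A →ₗ[R] A) h0A]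
    simp
  have hinlB : ∀ (r : R) (b : B), (TrivSqZeroExt.inl r : S) • b = r • b := by
    intro r b
    rw [epsModule_smul (0 : B →ₗ[R] B) h0B]
    simp
  have hgker : ∀ a : A, (ε : S) • ((g a : Q)) = 0 := fun a => (g a).2
  set g' : A →ₗ[S] Q :=
    { toFun := fun a => (g a : Q)
      map_add' := by
        intro a b
        show ((g (a + b) : Q)) = (g a : Q) + (g b : Q)
        rw [map_add]; rfl
      map_smul' := by
        intro s a
        show ((g (s • a) : Q)) = s • ((g a : Q))
        have hsa : s • a = s.fst • a := by
          rw [epsModule_smul (0 : A →ₗ[R] A) h0A]; simp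
        rw [hsa, map_smul]
        rw [smul_decomp (s := s) (q := (g a : Q)), hgker, smul_zero, add_zero]
        rfl } with hg'
  set FS : A →ₗ[S] B := epsHom 0 h0A 0 h0B F (by simp) with hFS
  obtain ⟨h', hh'⟩ := hQ.out FS hF g'
  have hmem : ∀ b : B, h' b ∈ LinearMap.ker (nu (R := R) Q) := by
    intro b
    rw [LinearMap.mem_ker]
    show (ε : S) • h' b = 0
    rw [← map_smul, heps, map_zero]
  refine ⟨{ toFun := fun b => ⟨h' b, hmem b⟩
            map_add' := by
              intro b b'
              apply Subtype.ext
              show h' (b + b') = h' b + h' b'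
              rw [map_add]
            map_smul' := by
              intro r b
              apply Subtype.ext
              show h' (r • b) = r • (h' b)
              rw [← hinlB, map_smul]
              rfl }, ?_⟩
  intro a
  apply Subtype.ext
  show h' (F a) = ((g a : Q))
  exact hh' a

theorem range_nu_eq_ker (Q : Type) [AddCommGroup Q] [Module S Q]
    (hQ : Module.Injective S Q) :
    letI : Module R Q := resModule Q
    LinearMap.range (nu (R := R) Q) = LinearMap.ker (nu (R := R) Q) := by
  letI : Module R Q := resModule Q
  ext q
  simp only [LinearMap.mem_range, LinearMap.mem_ker]
  constructor
  · rintro ⟨p, rfl⟩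
    exact nu_nu p
  · intro hq
    exact nu_surjOn_ker Q hQ q hq

theorem quot_nu_injective (Q : Type) [AddCommGroup Q] [Module S Q]
    (hQ : Module.Injective S Q) :
    letI : Module R Q := resModule Q
    Module.Injective R (Q ⧸ LinearMap.ker (nu (R := R) Q)) := by
  letI : Module R Q := resModule Q
  have e : (Q ⧸ LinearMap.ker (nu (R := R) Q)) ≃ₗ[R] ↥(LinearMap.ker (nu (R := R) Q)) :=
    (LinearMap.quotKerEquivRange (nu (R := R) Q)).trans
      (LinearEquiv.ofEq _ _ (range_nu_eq_ker Q hQ))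
  exact injective_of_equiv e.symm (ker_nu_injective Q hQ)

end KerNu
section Resolution

variable {R : Type} [Ring R]

/-- Extension along a map with kernel condition, into an injective module. -/
theorem extend_along {A B Q' : Type} [AddCommGroup A] [Module R A] [AddCommGroup B] [Module R B]
    [AddCommGroup Q'] [Module R Q'] (hQ' : Module.Injective R Q')
    (f : A →ₗ[R] B) (g : A →ₗ[R] Q') (hfg : ∀ a, f a = 0 → g a = 0) :
    ∃ h : B →ₗ[R] Q', ∀ a, h (f a) = g a := by
  have hle : LinearMap.ker f ≤ LinearMap.ker g := by
    intro a ha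
    rw [LinearMap.mem_ker] at ha ⊢
    exact hfg a ha
  set fbar := (LinearMap.ker f).liftQ f le_rfl with hfbar
  set gbar := (LinearMap.ker f).liftQ g hle with hgbar
  have hinj : Function.Injective fbar := by
    rw [← LinearMap.ker_eq_bot, hfbar]
    exact Submodule.ker_liftQ_eq_bot _ _ _ le_rfl
  obtain ⟨h, hh⟩ := hQ'.out fbar hinj gbar
  refine ⟨h, fun a => ?_⟩
  have := hh (Submodule.Quotient.mk a)
  rwa [hfbar, hgbar, Submodule.liftQ_apply, Submodule.liftQ_apply] at this

variable (C : CochainComplex (ModuleCat.{0} R) ℤ)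

/-- Reindexed form of homExact. -/
theorem homExact' (hC : IsCompleteInjectiveResolution R C) {Q' : Type} [AddCommGroup Q'] [Module R Q'] (hQ' : Module.Injective R Q')
    (k : ℤ) (g : Q' →ₗ[R] C.X (k+1)) (hg : ∀ q, (C.d (k+1) (k+1+1)).hom (g q) = 0) :
    ∃ h : Q' →ₗ[R] C.X k, ∀ q, (C.d k (k+1)).hom (h q) = g q := by
  have h0 : (C.d (k+1) (k+1+1)).hom.comp g = 0 :=
    LinearMap.ext fun q => hg q
  have hg' : Module.Injective R ↥(ModuleCat.of R Q') := hQ'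
  have := hC.homExact (ModuleCat.of R Q') hg' (k+1) g h0
  rw [show (k:ℤ)+1-1 = k by ring] at this
  obtain ⟨h, hh⟩ := this
  exact ⟨h, fun q => LinearMap.congr_fun hh q⟩

/-- Reindexed form of exactness. -/
theorem exact' (hC : IsCompleteInjectiveResolution R C) (k : ℤ) (x : C.X (k+1)) (hx : (C.d (k+1) (k+1+1)).hom x = 0) :
    ∃ w : C.X k, (C.d k (k+1)).hom w = x := by
  have h := hC.exact (k+1)
  rw [show (k:ℤ)+1-1 = k by ring] at h
  exact (h x).mp hx

theorem d_d_zero (i j l : ℤ) (x : C.X i) :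
    (C.d j l).hom ((C.d i j).hom x) = 0 := by
  have := C.d_comp_d i j l
  exact (congrArg (fun f => ModuleCat.Hom.hom f x) this).trans rfl

end Resolution

section IntRec

variable {P : ℤ → Type} {Rel : ∀ n : ℤ, P n → P (n+1) → Prop} {Inv : ∀ n : ℤ, P n → Prop}
variable (base : {s : P 0 // Inv 0 s})
  (up : ∀ n : ℤ, ∀ s : P n, Inv n s → ∃ s' : P (n+1), Rel n s s' ∧ Inv (n+1) s')
  (down : ∀ n : ℤ, ∀ s' : P (n+1), Inv (n+1) s' → ∃ s : P n, Rel n s s' ∧ Inv n s)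

noncomputable def IRup : ∀ t : ℕ, {s : P (Int.ofNat t) // Inv (Int.ofNat t) s}
  | 0 => base
  | t+1 =>
    ⟨(up (Int.ofNat t) (IRup t).1 (IRup t).2).choose,
      (up (Int.ofNat t) (IRup t).1 (IRup t).2).choose_spec.2⟩

noncomputable def IRdown : ∀ t : ℕ, {s : P (Int.negSucc t) // Inv (Int.negSucc t) s}
  | 0 => ⟨(down (Int.negSucc 0) base.1 base.2).choose,
      (down (Int.negSucc 0) base.1 base.2).choose_spec.2⟩
  | t+1 =>
    ⟨(down (Int.negSucc (t+1)) (IRdown t).1 (IRdown t).2).choose,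
      (down (Int.negSucc (t+1)) (IRdown t).1 (IRdown t).2).choose_spec.2⟩

noncomputable def IR : ∀ n : ℤ, {s : P n // Inv n s}
  | Int.ofNat t => IRup base up t
  | Int.negSucc t => IRdown base down t

theorem IR_rel : ∀ n : ℤ, Rel n ((IR base up down n).1) ((IR base up down (n+1)).1) := by
  intro n
  match n with
  | Int.ofNat t =>
    exact (up (Int.ofNat t) (IRup base up t).1 (IRup base up t).2).choose_spec.1
  | Int.negSucc 0 =>
    exact (down (Int.negSucc 0) base.1 base.2).choose_spec.1
  | Int.negSucc (t+1) =>
    exact (down (Int.negSucc (t+1)) (IRdown base down t).1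
      (IRdown base down t).2).choose_spec.1

theorem IR_zero : (IR base up down 0).1 = base.1 := rfl

end IntRec
section Sigma

variable {R : Type} [Ring R]

theorem exists_sigma (C : CochainComplex (ModuleCat.{0} R) ℤ)
    (hC : IsCompleteInjectiveResolution R C)
    (G : ↥(LinearMap.ker (C.d 0 1).hom) →ₗ[R] C.X 1)
    (hG : ∀ z, (C.d 1 (1+1)).hom (G z) = 0) :
    ∃ σ : ∀ n : ℤ, (C.X n →ₗ[R] C.X (n+1)),
      (∀ (n : ℤ) (x : C.X n),
        σ (n+1) ((C.d n (n+1)).hom x)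
          = - (C.d (n+1) (n+1+1)).hom (σ n x)) ∧
      (∀ z : ↥(LinearMap.ker (C.d 0 1).hom), σ 0 (z : C.X 0) = - G z) := by
  classical
  set P : ℤ → Type := fun n => (C.X n →ₗ[R] C.X (n+1)) with hP
  set Rel : ∀ n : ℤ, P n → P (n+1) → Prop := fun n s s' =>
    ∀ x : C.X n, s' ((C.d n (n+1)).hom x)
      = - (C.d (n+1) (n+1+1)).hom (s x) with hRel
  set Inv : ∀ n : ℤ, P n → Prop := fun n s =>
    ∀ a : C.X (n-1), (C.d (n+1) (n+1+1)).hom (s ((C.d (n-1) n).hom a)) = 0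
    with hInv
  -- base
  obtain ⟨s₀, hs₀⟩ := (hC.injective 1).out
    (LinearMap.ker (C.d 0 1).hom).subtype (Submodule.injective_subtype _) (-G)
  have hbaseInv : Inv 0 s₀ := by
    intro a
    have hmem : (C.d ((0:ℤ)-1) 0).hom a ∈ LinearMap.ker (C.d 0 1).hom := by
      rw [LinearMap.mem_ker]
      exact d_d_zero C (0-1) 0 1 a
    have h1 : s₀ ((C.d ((0:ℤ)-1) 0).hom a) = -G ⟨_, hmem⟩ := hs₀ ⟨_, hmem⟩
    show (C.d (0+1) (0+1+1)).hom (s₀ ((C.d (0-1) 0).hom a)) = 0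
    rw [h1, map_neg, neg_eq_zero]
    exact hG ⟨_, hmem⟩
  -- upward step
  have up : ∀ n : ℤ, ∀ s : P n, Inv n s → ∃ s' : P (n+1), Rel n s s' ∧ Inv (n+1) s' := by
    intro n s hs
    obtain ⟨s', hs'⟩ := extend_along (hC.injective (n+1+1))
      (C.d n (n+1)).hom
      (-((C.d (n+1) (n+1+1)).hom ∘ₗ s))
      (by
        intro a ha
        obtain ⟨b, hb⟩ := (hC.exact n a).mp ha
        simp only [LinearMap.neg_apply, LinearMap.comp_apply, neg_eq_zero]
        rw [← hb]
        exact hs b)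
    refine ⟨s', fun x => by rw [hs' x]; rfl, ?_⟩
    show ∀ a : C.X (n+1-1), (C.d (n+1+1) (n+1+1+1)).hom
      (s' ((C.d (n+1-1) (n+1)).hom a)) = 0
    rw [show (n:ℤ)+1-1 = n by ring]
    intro a
    rw [hs' a]
    show (C.d (n+1+1) (n+1+1+1)).hom
      (-((C.d (n+1) (n+1+1)).hom (s a))) = 0
    rw [map_neg, d_d_zero, neg_zero]
  -- downward step
  have down : ∀ n : ℤ, ∀ s' : P (n+1), Inv (n+1) s' → ∃ s : P n, Rel n s s' ∧ Inv n s := by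
    intro n s' hs'
    have hs'' : ∀ a : C.X n, (C.d (n+1+1) (n+1+1+1)).hom
        (s' ((C.d n (n+1)).hom a)) = 0 := by
      have := hs'
      rw [hInv] at this
      rw [show (n:ℤ)+1-1 = n by ring] at this
      exact this
    obtain ⟨s, hs⟩ := homExact' C hC (hC.injective n) (n+1)
      (-((s' : C.X (n+1) →ₗ[R] C.X (n+1+1)) ∘ₗ (C.d n (n+1)).hom))
      (by
        intro q
        simp only [LinearMap.neg_apply, LinearMap.comp_apply, map_neg, neg_eq_zero]
        exact hs'' q)
    refine ⟨s, fun x => ?_, fun a => ?_⟩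
    · have := hs x
      simp only [LinearMap.neg_apply, LinearMap.comp_apply] at this
      rw [eq_comm, neg_eq_iff_eq_neg, ← this]
    · have := hs ((C.d (n-1) n).hom a)
      simp only [LinearMap.neg_apply, LinearMap.comp_apply] at this
      rw [this, d_d_zero, map_zero, neg_zero]
  -- assemble
  refine ⟨fun n => (IR (Rel := Rel) (Inv := Inv) ⟨s₀, hbaseInv⟩ up down n).1,
    fun n => IR_rel ⟨s₀, hbaseInv⟩ up down n, fun z => ?_⟩
  show ((IR (Rel := Rel) (Inv := Inv) ⟨s₀, hbaseInv⟩ up down 0).1) (z : C.X 0) = - G z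
  rw [IR_zero]
  exact hs₀ z

end Sigma
section TComplex

variable {R : Type} [Ring R]

local notation "S" => TrivSqZeroExt R R
local notation "ε" => (TrivSqZeroExt.inr 1 : TrivSqZeroExt R R)

def prodAlpha (E : Type) [AddCommGroup E] [Module R E] : E × E →ₗ[R] E × E :=
  (LinearMap.inl R E E) ∘ₗ (LinearMap.snd R E E)

theorem prodAlpha_sq (E : Type) [AddCommGroup E] [Module R E] :
    prodAlpha (R := R) E ∘ₗ prodAlpha (R := R) E = 0 := by
  apply LinearMap.ext; intro x; simp [prodAlpha]

theorem injT (E : Type) [AddCommGroup E] [Module R E] (hE : Module.Injective R E) :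
    letI := epsModule (prodAlpha (R := R) E) (prodAlpha_sq E)
    Module.Injective S (E × E) := by
  letI := epsModule (prodAlpha (R := R) E) (prodAlpha_sq E)
  constructor
  intro A B _ _ _ _ F hF g
  letI : Module R A := resModule A
  letI : Module R B := resModule B
  have hsm : ∀ (r : R) (x : E × E), ((TrivSqZeroExt.inl r : S) • x).1 = r • x.1 := by
    intro r x
    rw [epsModule_smul (prodAlpha (R := R) E) (prodAlpha_sq E)]
    simp [prodAlpha]
  set φ : A →ₗ[R] E :=
    { toFun := fun a => (g a).1
      map_add' := by intro a b; show (g (a+b)).1 = (g a).1 + (g b).1; rw [map_add]; rfl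
      map_smul' := by
        intro r a
        show (g ((TrivSqZeroExt.inl r : S) • a)).1 = r • (g a).1
        rw [map_smul, hsm] } with hφ
  set FR : A →ₗ[R] B :=
    { toFun := F
      map_add' := F.map_add
      map_smul' := fun r a => F.map_smul (TrivSqZeroExt.inl r : S) a } with hFR
  obtain ⟨φ', hφ'⟩ := hE.out FR hF φ
  have hres : ∀ (r : R) (x : B), φ' ((TrivSqZeroExt.inl r : S) • x) = r • φ' x :=
    fun r x => φ'.map_smul r x
  have hepss : ∀ (s' : S) (b : B), (ε : S) • (s' • b) = (TrivSqZeroExt.inl s'.fst : S) • ((ε:S) • b) := by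
    intro s' b
    rw [← mul_smul, eps_mul_eq, ← mul_smul]
    congr 1
    rw [TrivSqZeroExt.inl_mul_inr, smul_eq_mul, mul_one]
  refine ⟨{ toFun := fun b => (φ' b, φ' ((ε : S) • b))
            map_add' := by
              intro b b'
              show (φ' (b + b'), φ' ((ε:S) • (b + b'))) = _
              rw [smul_add, map_add, map_add]
              rfl
            map_smul' := by
              intro s b
              show (φ' (s • b), φ' ((ε:S) • (s • b)))
                = s • (φ' b, φ' ((ε:S) • b))
              rw [epsModule_smul (prodAlpha (R := R) E) (prodAlpha_sq E)]
              have h1 : φ' (s • b) = s.fst • φ' b + s.snd • φ' ((ε:S) • b) := by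
                rw [smul_decomp (s := s) (q := b), map_add, hres, hres]
              have h2 : φ' ((ε:S) • (s • b)) = s.fst • φ' ((ε:S) • b) := by
                rw [hepss, hres]
              rw [h1, h2]
              apply Prod.ext <;> simp [prodAlpha] }, ?_⟩
  intro a
  show (φ' (F a), φ' ((ε : S) • F a)) = g a
  have h3 : (ε : S) • F a = F ((ε:S) • a) := (F.map_smul (ε:S) a).symm
  have h4 : φ' (F a) = (g a).1 := hφ' a
  have h5 : φ' (F ((ε:S) • a)) = (g ((ε:S) • a)).1 := hφ' ((ε:S) • a)
  have h6 : (g ((ε:S) • a)).1 = (g a).2 := by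
    rw [map_smul, epsModule_smul (prodAlpha (R := R) E) (prodAlpha_sq E)]
    simp [prodAlpha]
  apply Prod.ext
  · exact h4
  · show φ' ((ε : S) • F a) = (g a).2
    rw [h3, h5, h6]

variable (C : CochainComplex (ModuleCat.{0} R) ℤ)
  (σ : ∀ n : ℤ, (C.X n →ₗ[R] C.X (n+1)))

def TXmod (n : ℤ) : Module S (↥(C.X n) × ↥(C.X n)) :=
  epsModule (prodAlpha _) (prodAlpha_sq _)

def DmapR (n : ℤ) : (↥(C.X n) × ↥(C.X n)) →ₗ[R] (↥(C.X (n+1)) × ↥(C.X (n+1))) :=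
  LinearMap.prod
    (((C.d n (n+1)).hom ∘ₗ LinearMap.fst R _ _)
      + ((σ n) ∘ₗ LinearMap.snd R _ _))
    ((C.d n (n+1)).hom ∘ₗ LinearMap.snd R _ _)

theorem DmapR_apply (n : ℤ) (x : ↥(C.X n) × ↥(C.X n)) :
    DmapR C σ n x = ((C.d n (n+1)).hom x.1 + σ n x.2,
      (C.d n (n+1)).hom x.2) := rfl

def Dmap (n : ℤ) :
    letI := TXmod C n
    letI := TXmod C (n+1)
    (↥(C.X n) × ↥(C.X n)) →ₗ[S] (↥(C.X (n+1)) × ↥(C.X (n+1))) :=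
  epsHom _ (prodAlpha_sq _) _ (prodAlpha_sq _) (DmapR C σ n)
    (by intro x; apply Prod.ext <;> simp [prodAlpha, DmapR_apply])

def DmapHom (n : ℤ) :
    @ModuleCat.of S _ (↥(C.X n) × ↥(C.X n)) _ (TXmod C n) ⟶
      @ModuleCat.of S _ (↥(C.X (n+1)) × ↥(C.X (n+1))) _ (TXmod C (n+1)) :=
  letI := TXmod C n
  letI := TXmod C (n+1)
  ModuleCat.ofHom (Dmap C σ n)

theorem Dmap_apply (n : ℤ) (x : ↥(C.X n) × ↥(C.X n)) :
    Dmap C σ n x = ((C.d n (n+1)).hom x.1 + σ n x.2,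
      (C.d n (n+1)).hom x.2) := rfl

theorem Dmap_sq
    (rel : ∀ (n : ℤ) (x : ↥(C.X n)),
      σ (n+1) ((C.d n (n+1)).hom x) = - (C.d (n+1) (n+1+1)).hom (σ n x)) (n : ℤ) :
    letI := TXmod C n
    letI := TXmod C (n+1)
    letI := TXmod C (n+1+1)
    (Dmap C σ (n+1)).comp (Dmap C σ n) = 0 := by
      letI := TXmod C n
      letI := TXmod C (n+1)
      letI := TXmod C (n+1+1)
      apply LinearMap.ext
      intro x
      show Dmap C σ (n+1) (Dmap C σ n x) = 0
      rw [Dmap_apply, Dmap_apply]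
      apply Prod.ext
      · show (C.d (n+1) (n+1+1)).hom ((C.d n (n+1)).hom x.1 + σ n x.2)
          + σ (n+1) ((C.d n (n+1)).hom x.2) = 0
        rw [map_add, rel n x.2, d_d_zero]
        simp
      · show (C.d (n+1) (n+1+1)).hom ((C.d n (n+1)).hom x.2) = 0
        exact d_d_zero C n (n+1) (n+1+1) x.2

/-- The twisted double complex. -/
noncomputable def TCx
    (rel : ∀ (n : ℤ) (x : ↥(C.X n)),
      σ (n+1) ((C.d n (n+1)).hom x) = - (C.d (n+1) (n+1+1)).hom (σ n x)) :
    CochainComplex (ModuleCat.{0} S) ℤ :=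
  CochainComplex.of (fun n => @ModuleCat.of S _ (↥(C.X n) × ↥(C.X n)) _ (TXmod C n))
    (fun n => DmapHom C σ n)
    (by
      intro n
      apply ModuleCat.hom_ext
      exact Dmap_sq C σ rel n)

theorem TC_d (rel) (n : ℤ) : (TCx C σ rel).d n (n+1) = DmapHom C σ n :=
  CochainComplex.of_d (α := ℤ) (V := ModuleCat.{0} S)
    (fun n => @ModuleCat.of S _ (↥(C.X n) × ↥(C.X n)) _ (TXmod C n)) (fun n => DmapHom C σ n) n

end TComplex
section KillLift

variable {R : Type} [Ring R]

local notation "S" => TrivSqZeroExt R R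

theorem killLift (C : CochainComplex (ModuleCat.{0} R) ℤ)
    (hC : IsCompleteInjectiveResolution R C)
    {Q : Type} [AddCommGroup Q] [Module R Q] (ν : Q →ₗ[R] Q)
    (hrange : ∀ x, ν x = 0 → ∃ p, ν p = x) (hν2 : ∀ q, ν (ν q) = 0)
    (hQbar : Module.Injective R (Q ⧸ LinearMap.ker ν))
    (k : ℤ) (θ : Q →ₗ[R] C.X (k+1))
    (hθ1 : ∀ q, (C.d (k+1) (k+1+1)).hom (θ q) = 0)
    (hθ2 : ∀ q, θ (ν q) = 0) :
    ∃ w : Q →ₗ[R] C.X k,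
      (∀ q, (C.d k (k+1)).hom (w q) = θ q) ∧ ∀ q, w (ν q) = 0 := by
  set N := LinearMap.ker ν with hN
  have hle : ∀ x, x ∈ N → θ x = 0 := by
    intro x hx
    rw [hN, LinearMap.mem_ker] at hx
    obtain ⟨p, hp⟩ := hrange x hx
    rw [← hp]
    exact hθ2 p
  set θbar : (Q ⧸ N) →ₗ[R] C.X (k+1) := N.liftQ θ (fun x hx => by
    rw [LinearMap.mem_ker]; exact hle x hx) with hθbar
  obtain ⟨wbar, hwbar⟩ := homExact' C hC hQbar k θbar (by
    intro x
    obtain ⟨q, rfl⟩ := Submodule.Quotient.mk_surjective N x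
    rw [hθbar, Submodule.liftQ_apply]
    exact hθ1 q)
  refine ⟨wbar ∘ₗ N.mkQ, fun q => ?_, fun q => ?_⟩
  · rw [LinearMap.comp_apply, Submodule.mkQ_apply, hwbar, hθbar, Submodule.liftQ_apply]
  · rw [LinearMap.comp_apply, Submodule.mkQ_apply]
    have : Submodule.Quotient.mk (p := N) (ν q) = 0 := by
      rw [Submodule.Quotient.mk_eq_zero, hN, LinearMap.mem_ker]
      exact hν2 q
    rw [this, map_zero]

theorem sigma_shift (C : CochainComplex (ModuleCat.{0} R) ℤ)
    (σ : ∀ n : ℤ, (C.X n →ₗ[R] C.X (n+1)))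
    (rel : ∀ (n : ℤ) (x : ↥(C.X n)),
      σ (n+1) ((C.d n (n+1)).hom x) = - (C.d (n+1) (n+1+1)).hom (σ n x))
    (k : ℤ) :
    ∃ s' : ↥(C.X (k-1)) →ₗ[R] ↥(C.X k),
      ∀ x, (C.d k (k+1)).hom (s' x) = - σ k ((C.d (k-1) k).hom x) := by
  obtain ⟨j, rfl⟩ : ∃ j : ℤ, k = j + 1 := ⟨k - 1, by ring⟩
  rw [show (j:ℤ)+1-1 = j by ring]
  exact ⟨σ j, fun x => by rw [rel j x, neg_neg]⟩

theorem zLift (C : CochainComplex (ModuleCat.{0} R) ℤ)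
    (hC : IsCompleteInjectiveResolution R C)
    {Q : Type} [AddCommGroup Q] [Module R Q] (ν : Q →ₗ[R] Q)
    (hrange : ∀ x, ν x = 0 → ∃ p, ν p = x) (hν2 : ∀ q, ν (ν q) = 0)
    (hQbar : Module.Injective R (Q ⧸ LinearMap.ker ν))
    (σ : ∀ n : ℤ, (C.X n →ₗ[R] C.X (n+1)))
    (rel : ∀ (n : ℤ) (x : ↥(C.X n)),
      σ (n+1) ((C.d n (n+1)).hom x) = - (C.d (n+1) (n+1+1)).hom (σ n x))
    (k : ℤ) (τ : Q →ₗ[R] C.X k)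
    (hτ1 : ∀ q, (C.d k (k+1)).hom (τ q) = 0)
    (hτ2 : ∀ q, τ (ν q) = 0) :
    ∃ z : Q →ₗ[R] C.X k,
      (∀ q, (C.d k (k+1)).hom (z q) = - σ k (τ q)) ∧ ∀ q, z (ν q) = 0 := by
  obtain ⟨s', hs'⟩ := sigma_shift C σ rel k
  have KL := killLift C hC ν hrange hν2 hQbar (k-1)
  rw [show (k:ℤ)-1+1 = k by ring] at KL
  obtain ⟨u, hu1, hu2⟩ := KL τ hτ1 hτ2
  refine ⟨s' ∘ₗ u, fun q => ?_, fun q => ?_⟩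
  · rw [LinearMap.comp_apply, hs', hu1]
  · rw [LinearMap.comp_apply, hu2, map_zero]

end KillLift
section TCxComplete

variable {R : Type} [Ring R]

local notation "S" => TrivSqZeroExt R R
local notation "ε" => (TrivSqZeroExt.inr 1 : TrivSqZeroExt R R)

theorem eps_smul_smul {Q : Type} [AddCommGroup Q] [Module S Q] (s : S) (q : Q) :
    (ε : S) • (s • q) = (TrivSqZeroExt.inl s.fst : S) • ((ε : S) • q) := by
  rw [← mul_smul, eps_mul_eq, ← mul_smul]
  congr 1
  rw [TrivSqZeroExt.inl_mul_inr, smul_eq_mul, mul_one]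

theorem TCx_complete (C : CochainComplex (ModuleCat.{0} R) ℤ)
    (hC : IsCompleteInjectiveResolution R C)
    (σ : ∀ n : ℤ, (C.X n →ₗ[R] C.X (n+1)))
    (rel : ∀ (n : ℤ) (x : ↥(C.X n)),
      σ (n+1) ((C.d n (n+1)).hom x) = - (C.d (n+1) (n+1+1)).hom (σ n x)) :
    IsCompleteInjectiveResolution S (TCx C σ rel) := by
  constructor
  · -- injectivity
    intro n
    exact injT (↥(C.X n)) (hC.injective n)
  · -- exactness
    intro n
    obtain ⟨m, rfl⟩ : ∃ m : ℤ, n = m + 1 := ⟨n - 1, by ring⟩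
    rw [show (m:ℤ)+1-1 = m by ring, TC_d C σ rel m, TC_d C σ rel (m+1)]
    intro y
    constructor
    · intro hy
      have h1 : (C.d (m+1) (m+1+1)).hom y.1 + σ (m+1) y.2 = 0 := congrArg Prod.fst hy
      have h2 : (C.d (m+1) (m+1+1)).hom y.2 = 0 := congrArg Prod.snd hy
      obtain ⟨w, hw⟩ := exact' C hC m y.2 h2
      have h4 : σ (m+1) ((C.d m (m+1)).hom w)
          = - (C.d (m+1) (m+1+1)).hom (σ m w) := rel m w
      rw [hw] at h4
      have h5 : (C.d (m+1) (m+1+1)).hom y.1 = - σ (m+1) y.2 :=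
        eq_neg_of_add_eq_zero_left h1
      have h3 : (C.d (m+1) (m+1+1)).hom (y.1 - σ m w) = 0 := by
        rw [map_sub, h5, h4, neg_neg, sub_self]
      obtain ⟨a, ha⟩ := exact' C hC m (y.1 - σ m w) h3
      refine ⟨(a, w), ?_⟩
      show Dmap C σ m (a, w) = y
      apply Prod.ext
      · show (C.d m (m+1)).hom a + σ m w = y.1
        rw [ha]
        abel
      · exact hw
    · rintro ⟨x, rfl⟩
      apply Prod.ext
      · show (C.d (m+1) (m+1+1)).hom
            ((C.d m (m+1)).hom x.1 + σ m x.2)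
          + σ (m+1) ((C.d m (m+1)).hom x.2) = 0
        rw [map_add, rel m x.2, d_d_zero]
        abel
      · show (C.d (m+1) (m+1+1)).hom ((C.d m (m+1)).hom x.2) = 0
        exact d_d_zero C m (m+1) (m+1+1) x.2
  · -- homExact
    intro Q hQ n g hg
    obtain ⟨m, rfl⟩ : ∃ m : ℤ, n = m + 1 := ⟨n - 1, by ring⟩
    rw [show (m:ℤ)+1-1 = m by ring]
    letI : Module R ↥Q := resModule ↥Q
    set ν : ↥Q →ₗ[R] ↥Q := nu (R := R) ↥Q with hνdef
    have hrange : ∀ x, ν x = 0 → ∃ p, ν p = x := fun x hx => nu_surjOn_ker ↥Q hQ x hx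
    have hν2 : ∀ q, ν (ν q) = 0 := fun q => nu_nu q
    have hQbar : Module.Injective R (↥Q ⧸ LinearMap.ker ν) := quot_nu_injective ↥Q hQ
    have hQres : Module.Injective R ↥Q := res_injective ↥Q hQ
    set g1 : ↥Q →ₗ[R] ↥(C.X (m+1)) :=
      { toFun := fun q => (g q).1
        map_add' := by intro a b; show (g (a+b)).1 = (g a).1 + (g b).1; rw [map_add]; rfl
        map_smul' := by
          intro r q
          show (g ((TrivSqZeroExt.inl r : S) • q)).1 = r • (g q).1
          rw [map_smul]
          show r • (g q).1 + (0 : R) • (g q).2 = r • (g q).1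
          rw [zero_smul, add_zero] } with hg1def
    have hg1 : ∀ q, g1 q = (g q).1 := fun q => rfl
    have hgnu : ∀ q, (g q).2 = g1 (ν q) := by
      intro q
      have : g1 (ν q) = (g ((ε:S) • q)).1 := rfl
      rw [this, map_smul]
      show (g q).2 = (0 : R) • (g q).1 + (1 : R) • (g q).2
      rw [zero_smul, one_smul, zero_add]
    have hgd : ∀ q, (C.d (m+1) (m+1+1)).hom (g1 q) = - σ (m+1) (g1 (ν q)) := by
      intro q
      have h0 := LinearMap.congr_fun hg q
      rw [TC_d C σ rel (m+1)] at h0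
      have h0' : Dmap C σ (m+1) (g q) = 0 := h0
      have h1 : (C.d (m+1) (m+1+1)).hom (g q).1 + σ (m+1) (g q).2 = 0 :=
        congrArg Prod.fst h0'
      rw [hgnu] at h1
      exact eq_neg_of_add_eq_zero_left h1
    -- step 1 : ρ
    obtain ⟨ρ, hρ1, hρ2⟩ := killLift C hC ν hrange hν2 hQbar m (g1 ∘ₗ ν)
      (by
        intro q
        rw [LinearMap.comp_apply, hgd (ν q), hν2 q, map_zero, map_zero, neg_zero])
      (by
        intro q
        rw [LinearMap.comp_apply, hν2 q, map_zero])
    -- step 2 : ψ₁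
    obtain ⟨ψ₁, hψ₁⟩ := homExact' C hC hQres m (g1 - (σ m) ∘ₗ ρ)
      (by
        intro q
        rw [LinearMap.sub_apply, LinearMap.comp_apply, map_sub, hgd q]
        have h6 : σ (m+1) ((C.d m (m+1)).hom (ρ q))
            = - (C.d (m+1) (m+1+1)).hom (σ m (ρ q)) := rel m (ρ q)
        rw [hρ1 q, LinearMap.comp_apply] at h6
        rw [h6, neg_neg, sub_self])
    -- step 3 : τ and z
    set τ : ↥Q →ₗ[R] ↥(C.X m) := ψ₁ ∘ₗ ν - ρ with hτdef
    have hτval : ∀ q, τ q = ψ₁ (ν q) - ρ q := fun q => rfl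
    have hτ1 : ∀ q, (C.d m (m+1)).hom (τ q) = 0 := by
      intro q
      rw [hτval, map_sub, hψ₁ (ν q), hρ1 q]
      rw [LinearMap.sub_apply, LinearMap.comp_apply, LinearMap.comp_apply, hρ2 q, map_zero,
        sub_zero, sub_self]
    have hτ2 : ∀ q, τ (ν q) = 0 := by
      intro q
      rw [hτval, hν2 q, map_zero, hρ2 q, sub_zero]
    obtain ⟨z, hz1, hz2⟩ := zLift C hC ν hrange hν2 hQbar σ rel m τ hτ1 hτ2
    -- step 4 : ψ and the S-linear lift
    set ψ : ↥Q →ₗ[R] ↥(C.X m) := ψ₁ + z with hψdef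
    have hψval : ∀ q, ψ q = ψ₁ q + z q := fun q => rfl
    have key1 : ∀ q, (C.d m (m+1)).hom (ψ q) + σ m (ψ (ν q)) = g1 q := by
      intro q
      rw [hψval, hψval, map_add, hψ₁ q, hz1 q, hz2 q, add_zero]
      have hψ₁ν : ψ₁ (ν q) = τ q + ρ q := by
        rw [hτval]; abel
      rw [hψ₁ν, map_add, LinearMap.sub_apply, LinearMap.comp_apply]
      abel
    have key2 : ∀ q, (C.d m (m+1)).hom (ψ (ν q)) = g1 (ν q) := by
      intro q
      rw [hψval, hz2 q, add_zero, hψ₁ (ν q), LinearMap.sub_apply, LinearMap.comp_apply,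
        hρ2 q, map_zero, sub_zero]
    have hψres : ∀ (r : R) (x : ↥Q), ψ ((TrivSqZeroExt.inl r : S) • x) = r • ψ x :=
      fun r x => ψ.map_smul r x
    letI : Module S (↥(C.X m) × ↥(C.X m)) := TXmod C m
    set H : ↥Q →ₗ[S] ↥((TCx C σ rel).X m) :=
      { toFun := fun q => ((ψ q, ψ (ν q)) : ↥(C.X m) × ↥(C.X m))
        map_add' := by
          intro a b
          show ((ψ (a+b), ψ (ν (a+b))) : ↥(C.X m) × ↥(C.X m)) = _
          rw [map_add ν, map_add, map_add]
          rfl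
        map_smul' := by
          intro s q
          show ((ψ (s • q), ψ (ν (s • q))) : ↥(C.X m) × ↥(C.X m)) = s • (ψ q, ψ (ν q))
          apply Prod.ext
          · show ψ (s • q) = s.fst • ψ q + s.snd • ψ (ν q)
            rw [smul_decomp (s := s) (q := q), map_add, hψres]
            have : ψ ((TrivSqZeroExt.inl s.snd : S) • ((ε:S) • q)) = s.snd • ψ (ν q) :=
              hψres s.snd ((ε:S) • q)
            rw [this]
          · show ψ (ν (s • q)) = s.fst • ψ (ν q) + s.snd • (0 : ↥(C.X m))
            rw [smul_zero, add_zero]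
            have hν' : ν (s • q) = (TrivSqZeroExt.inl s.fst : S) • (ν q) := eps_smul_smul s q
            rw [hν', hψres] } with hHdef
    refine ⟨H, ?_⟩
    rw [TC_d C σ rel m]
    apply LinearMap.ext
    intro q
    show Dmap C σ m ((ψ q, ψ (ν q)) : ↥(C.X m) × ↥(C.X m)) = g q
    apply Prod.ext
    · show (C.d m (m+1)).hom (ψ q) + σ m (ψ (ν q)) = (g q).1
      rw [key1 q, hg1]
    · show (C.d m (m+1)).hom (ψ (ν q)) = (g q).2
      rw [key2 q, ← hgnu q]

end TCxComplete
/-- If `Y →β Y →β Y` is exact and `ker(β)` is Gorenstein injective over `R`, then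
`[Y, β]` is a Gorenstein injective `R ⋉ R`-module. -/
theorem stmt_12 (R Y : Type) [Ring R] [AddCommGroup Y] [Module R Y]
    (β : Y →ₗ[R] Y) (hβ : β ∘ₗ β = 0)
    (hex : LinearMap.range β = LinearMap.ker β)
    (hGI : IsGorensteinInjective R ↥(LinearMap.ker β)) :
    letI : Module (TrivSqZeroExt R R) Y := epsModule β hβ
    IsGorensteinInjective (TrivSqZeroExt R R) Y := by
  letI : Module (TrivSqZeroExt R R) Y := epsModule β hβ
  show IsGorensteinInjective (TrivSqZeroExt R R) Y
  obtain ⟨C, hC, ⟨e⟩⟩ := hGI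
  have hββ : ∀ y : Y, β (β y) = 0 := fun y => LinearMap.congr_fun hβ y
  have hmem : ∀ y : Y, β y ∈ LinearMap.ker β := fun y => LinearMap.mem_ker.mpr (hββ y)
  set ι : ↥(LinearMap.ker β) →ₗ[R] ↥(C.X 0) :=
    (LinearMap.ker (C.d 0 1).hom).subtype ∘ₗ e.toLinearMap with hιdef
  have hι : ∀ k : ↥(LinearMap.ker β), ι k = ((e k : ↥(LinearMap.ker (C.d 0 1).hom)) : ↥(C.X 0)) :=
    fun k => rfl
  have hιinj : Function.Injective ι := by
    intro a b hab
    apply e.injective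
    apply Subtype.ext
    exact hab
  obtain ⟨f, hf⟩ := (hC.injective 0).out (LinearMap.ker β).subtype
    (Submodule.injective_subtype _) ι
  -- hf : ∀ x : ker β, f ↑x = ι x
  set dof : Y →ₗ[R] ↥(C.X 1) := (C.d 0 1).hom ∘ₗ f with hdofdef
  have hkill : LinearMap.ker β ≤ LinearMap.ker dof := by
    intro y hy
    rw [LinearMap.mem_ker]
    show (C.d 0 1).hom (f y) = 0
    have : f y = ι ⟨y, hy⟩ := hf ⟨y, hy⟩
    rw [this, hι]
    exact (e ⟨y, hy⟩).2
  set qe : (Y ⧸ LinearMap.ker β) ≃ₗ[R] ↥(LinearMap.ker (C.d 0 1).hom) :=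
    (β.quotKerEquivRange.trans (LinearEquiv.ofEq _ _ hex)).trans e with hqedef
  have hqe : ∀ y : Y, qe (Submodule.Quotient.mk y) = e ⟨β y, hmem y⟩ := by
    intro y
    have hX : (LinearEquiv.ofEq _ _ hex) (β.quotKerEquivRange (Submodule.Quotient.mk y))
        = ⟨β y, hmem y⟩ := by
      apply Subtype.ext
      rw [LinearEquiv.coe_ofEq_apply]
      exact β.quotKerEquivRange_apply_mk y
    show e ((LinearEquiv.ofEq _ _ hex) (β.quotKerEquivRange (Submodule.Quotient.mk y)))
      = e ⟨β y, hmem y⟩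
    rw [hX]
  set G : ↥(LinearMap.ker (C.d 0 1).hom) →ₗ[R] ↥(C.X 1) :=
    ((LinearMap.ker β).liftQ dof hkill) ∘ₗ
      (qe.symm : ↥(LinearMap.ker (C.d 0 1).hom) →ₗ[R] (Y ⧸ LinearMap.ker β))
    with hGdef
  have hGeval : ∀ y : Y, G (e ⟨β y, hmem y⟩) = dof y := by
    intro y
    rw [hGdef, LinearMap.comp_apply, ← hqe y]
    show ((LinearMap.ker β).liftQ dof hkill) (qe.symm (qe (Submodule.Quotient.mk y))) = dof y
    rw [LinearEquiv.symm_apply_apply, Submodule.liftQ_apply]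
  have hGd : ∀ z, (C.d 1 (1+1)).hom (G z) = 0 := by
    intro z
    obtain ⟨w, hw⟩ := qe.surjective z
    obtain ⟨y, rfl⟩ := Submodule.Quotient.mk_surjective _ w
    rw [← hw, hqe y, hGeval y]
    exact d_d_zero C 0 1 (1+1) (f y)
  obtain ⟨σ, rel, hσ0⟩ := exists_sigma C hC G hGd
  refine ⟨TCx C σ rel, TCx_complete C hC σ rel, ⟨?_⟩⟩
  -- the S-linear embedding Φ
  letI : Module (TrivSqZeroExt R R) (↥(C.X 0) × ↥(C.X 0)) := TXmod C 0
  have hFcomm : ∀ y : Y,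
      (LinearMap.prod f (ι ∘ₗ β.codRestrict (LinearMap.ker β) hmem)) (β y)
        = prodAlpha (R := R) ↥(C.X 0)
          ((LinearMap.prod f (ι ∘ₗ β.codRestrict (LinearMap.ker β) hmem)) y) := by
    intro y
    apply Prod.ext
    · show f (β y) = ι (β.codRestrict (LinearMap.ker β) hmem y)
      have : f (β y) = ι ⟨β y, hmem y⟩ := hf ⟨β y, hmem y⟩
      rw [this]
      rfl
    · show ι (β.codRestrict (LinearMap.ker β) hmem (β y)) = (0 : ↥(C.X 0))
      have h1 : β.codRestrict (LinearMap.ker β) hmem (β y) = 0 := by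
        apply Subtype.ext
        show β (β y) = 0
        exact hββ y
      rw [h1, map_zero]
  set Φ : Y →ₗ[TrivSqZeroExt R R] (↥(C.X 0) × ↥(C.X 0)) :=
    epsHom β hβ (prodAlpha _) (prodAlpha_sq _)
      (LinearMap.prod f (ι ∘ₗ β.codRestrict (LinearMap.ker β) hmem)) hFcomm with hΦdef
  have hΦval : ∀ y : Y, Φ y = (f y, ι ⟨β y, hmem y⟩) := by
    intro y
    rw [hΦdef]
    show (LinearMap.prod f (ι ∘ₗ β.codRestrict (LinearMap.ker β) hmem)) y = _
    apply Prod.ext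
    · rfl
    · show ι (β.codRestrict (LinearMap.ker β) hmem y) = ι ⟨β y, hmem y⟩
      rfl
  have hd01 : (TCx C σ rel).d 0 1 = DmapHom C σ 0 := TC_d C σ rel 0
  have hσι : ∀ k : ↥(LinearMap.ker β), σ 0 (ι k) = - G (e k) := by
    intro k
    rw [hι]
    exact hσ0 (e k)
  have hmemΦ : ∀ y : Y, Φ y ∈ LinearMap.ker
      ((TCx C σ rel).d 0 1).hom := by
    intro y
    show ((TCx C σ rel).d 0 1).hom (Φ y) = 0
    rw [hd01, hΦval y]
    show Dmap C σ 0 ((f y, ι ⟨β y, hmem y⟩) : ↥(C.X 0) × ↥(C.X 0)) = 0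
    apply Prod.ext
    · show (C.d 0 (0+1)).hom (f y) + σ 0 (ι ⟨β y, hmem y⟩) = 0
      rw [hσι, hGeval y]
      show dof y + - dof y = 0
      rw [add_neg_cancel]
    · show (C.d 0 (0+1)).hom (ι ⟨β y, hmem y⟩) = 0
      rw [hι]
      exact (e ⟨β y, hmem y⟩).2
  have hΦinj : Function.Injective Φ := by
    intro a b hab
    have h1 : f a = f b := congrArg Prod.fst ((hΦval a).symm.trans (hab.trans (hΦval b)))
    have h2 : ι ⟨β a, hmem a⟩ = ι ⟨β b, hmem b⟩ :=
      congrArg Prod.snd ((hΦval a).symm.trans (hab.trans (hΦval b)))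
    have h3 : β a = β b := congrArg Subtype.val (hιinj h2)
    have h4 : a - b ∈ LinearMap.ker β := by
      rw [LinearMap.mem_ker, map_sub, h3, sub_self]
    have h5 : f (a - b) = ι ⟨a - b, h4⟩ := hf ⟨a - b, h4⟩
    rw [map_sub, h1, sub_self] at h5
    have h6 : (⟨a - b, h4⟩ : ↥(LinearMap.ker β)) = 0 := hιinj (by rw [← h5, map_zero])
    have h7 : a - b = 0 := congrArg Subtype.val h6
    exact sub_eq_zero.mp h7
  have hΦsurj : ∀ x : ↥(C.X 0) × ↥(C.X 0), Dmap C σ 0 x = 0 → ∃ y : Y, Φ y = x := by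
    intro x hx
    have h1 : (C.d 0 (0+1)).hom x.1 + σ 0 x.2 = 0 := congrArg Prod.fst hx
    have h2 : (C.d 0 (0+1)).hom x.2 = 0 := congrArg Prod.snd hx
    set zx : ↥(LinearMap.ker (C.d 0 1).hom) := ⟨x.2, h2⟩ with hzxdef
    set k : ↥(LinearMap.ker β) := e.symm zx with hkdef
    have hkr : (k : Y) ∈ LinearMap.range β := by rw [hex]; exact k.2
    obtain ⟨y₀, hy₀⟩ := hkr
    have he1 : (⟨β y₀, hmem y₀⟩ : ↥(LinearMap.ker β)) = k := Subtype.ext hy₀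
    have he2 : e ⟨β y₀, hmem y₀⟩ = zx := by rw [he1, hkdef, e.apply_symm_apply]
    have h3 : σ 0 x.2 = - G zx := hσ0 zx
    have h4 : (C.d 0 (0+1)).hom x.1 = G zx := by
      rw [h3] at h1
      exact eq_of_sub_eq_zero (by rw [sub_eq_add_neg]; exact h1)
    have h5 : (C.d 0 (0+1)).hom (x.1 - f y₀) = 0 := by
      rw [map_sub, h4, ← he2, hGeval y₀]
      show dof y₀ - dof y₀ = 0
      rw [sub_self]
    have hw : x.1 - f y₀ ∈ LinearMap.ker (C.d 0 1).hom := h5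
    set k₂ : ↥(LinearMap.ker β) := e.symm ⟨x.1 - f y₀, hw⟩ with hk₂def
    refine ⟨y₀ + (k₂ : Y), ?_⟩
    rw [hΦval]
    apply Prod.ext
    · show f (y₀ + (k₂ : Y)) = x.1
      rw [map_add]
      have h6 : f (k₂ : Y) = ι k₂ := hf k₂
      rw [h6, hι, hk₂def, e.apply_symm_apply]
      show f y₀ + (x.1 - f y₀) = x.1
      abel
    · show ι ⟨β (y₀ + (k₂ : Y)), hmem _⟩ = x.2
      have h7 : (⟨β (y₀ + (k₂ : Y)), hmem _⟩ : ↥(LinearMap.ker β)) = k := by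
        apply Subtype.ext
        show β (y₀ + (k₂ : Y)) = (k : Y)
        rw [map_add]
        have h8 : β (k₂ : Y) = 0 := k₂.2
        rw [h8, add_zero, hy₀]
      rw [h7, hι, hkdef, e.apply_symm_apply]
  -- final equivalence
  refine LinearEquiv.ofBijective
    (Φ.codRestrict (LinearMap.ker
      ((TCx C σ rel).d 0 1).hom)
      hmemΦ) ⟨?_, ?_⟩
  · intro a b h
    exact hΦinj (congrArg Subtype.val h)
  · rintro ⟨x, hx⟩
    replace hx : ((TCx C σ rel).d 0 1).hom x = 0 := hx
    rw [hd01] at hx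
    obtain ⟨y, hy⟩ := hΦsurj x hx
    exact ⟨y, Subtype.ext hy⟩
end

section
/- Let R be a ring and M an R-R-bimodule such that the right R-module M has finite flat dimension and the left R-module M has finite projective dimension. Then for every complete projective resolution Δ in R-Mod (an exact complex of projective left R-modules staying exact under Hom_R(−, Q) for all projective Q), and every module L in Add(M), the complex Hom_R(Δ, L) is exact; and for every complete projective resolution Ξ in R-Mod, the complex M ⊗_R Ξ is exact. In particular M is a generalized compatible R-R-bimodule. -/
open TensorProduct

open TensorProduct

/-- `L` belongs to `Add(N)`: `L` is a direct summand of a direct sum of copies of `N`. -/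
def MemAdd (S : Type) [CommRing S] (N : Type) [AddCommGroup N] [Module S N]
    (L : Type) [AddCommGroup L] [Module S L] : Prop :=
  ∃ (ι : Type) (i : L →ₗ[S] (ι →₀ N)) (p : (ι →₀ N) →ₗ[S] L), p ∘ₗ i = LinearMap.id

/-- `N` is a generalized compatible `S`-`T`-bimodule: (1) `N ⊗_T -` preserves exactness of
complete projective resolutions in `T`-Mod; (2) `Hom_S(-, L)` preserves exactness of complete
projective resolutions in `S`-Mod for every `L ∈ Add(N)`. -/
def IsGenCompatible (S T : Type) [CommRing S] [CommRing T] (N : Type) [AddCommGroup N]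
    [Module S N] [Module T N] : Prop :=
  (∀ Ξ : CochainComplex (ModuleCat.{0} T) ℤ, IsCompleteProjectiveResolution T Ξ →
    ∀ n : ℤ, Function.Exact
      ⇑(LinearMap.lTensor N ((Ξ.d (n-1) n).hom : Ξ.X (n-1) →ₗ[T] Ξ.X n))
      ⇑(LinearMap.lTensor N ((Ξ.d n (n+1)).hom : Ξ.X n →ₗ[T] Ξ.X (n+1)))) ∧
  (∀ Δ : CochainComplex (ModuleCat.{0} S) ℤ, IsCompleteProjectiveResolution S Δ →
    ∀ (L : Type) [AddCommGroup L] [Module S L], MemAdd S N L →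
      ∀ (n : ℤ) (g : Δ.X n →ₗ[S] L),
        g ∘ₗ ((Δ.d (n-1) n).hom : Δ.X (n-1) →ₗ[S] Δ.X n) = 0 →
          ∃ h : Δ.X (n+1) →ₗ[S] L, h ∘ₗ ((Δ.d n (n+1)).hom : Δ.X n →ₗ[S] Δ.X (n+1)) = g)

/-- `M` has finite projective dimension: it admits a finite-length projective resolution. -/
def HasFiniteProjectiveDimension (R : Type) [CommRing R] (M : Type) [AddCommGroup M]
    [Module R M] : Prop :=
  ∃ (n : ℕ) (P : ℕ → ModuleCat.{0} R) (d : ∀ i : ℕ, P (i+1) ⟶ P i)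
    (ε : P 0 ⟶ ModuleCat.of R M),
    (∀ i, Module.Projective R (P i)) ∧ Function.Surjective ε ∧
    Function.Exact ⇑(d 0) ⇑ε ∧ (∀ i, Function.Exact ⇑(d (i+1)) ⇑(d i)) ∧
    ∀ i, n ≤ i → Subsingleton (P i)

/-- `M` has finite flat dimension: it admits a finite-length flat resolution. -/
def HasFiniteFlatDimension (R : Type) [CommRing R] (M : Type) [AddCommGroup M]
    [Module R M] : Prop :=
  ∃ (n : ℕ) (P : ℕ → ModuleCat.{0} R) (d : ∀ i : ℕ, P (i+1) ⟶ P i)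
    (ε : P 0 ⟶ ModuleCat.of R M),
    (∀ i, Module.Flat R (P i)) ∧ Function.Surjective ε ∧
    Function.Exact ⇑(d 0) ⇑ε ∧ (∀ i, Function.Exact ⇑(d (i+1)) ⇑(d i)) ∧
    ∀ i, n ≤ i → Subsingleton (P i)

section Aux

variable {R : Type} [CommRing R]

/-- names reserved: use prefix st16 -/
lemma st16_exact' {C : CochainComplex (ModuleCat.{0} R) ℤ}
    (hC : ∀ n : ℤ, Function.Exact ⇑(C.d (n-1) n) ⇑(C.d n (n+1)))
    (a b c : ℤ) (hab : a = b - 1) (hbc : c = b + 1) :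
    Function.Exact ⇑(C.d a b) ⇑(C.d b c) := by
  subst hab hbc; exact hC b

def st16PRes (R : Type) [CommRing R] (m : ℕ) (N : Type) [AddCommGroup N] [Module R N] : Prop :=
  ∃ (P : ℕ → ModuleCat.{0} R) (d : ∀ i, (P (i+1) : Type) →ₗ[R] P i) (ε : (P 0 : Type) →ₗ[R] N),
    (∀ i, Module.Projective R (P i)) ∧ Function.Surjective ε ∧
    Function.Exact ⇑(d 0) ⇑ε ∧ (∀ i, Function.Exact ⇑(d (i+1)) ⇑(d i)) ∧
    (∀ i, m ≤ i → Subsingleton (P i))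

def st16FRes (R : Type) [CommRing R] (m : ℕ) (N : Type) [AddCommGroup N] [Module R N] : Prop :=
  ∃ (P : ℕ → ModuleCat.{0} R) (d : ∀ i, (P (i+1) : Type) →ₗ[R] P i) (ε : (P 0 : Type) →ₗ[R] N),
    (∀ i, Module.Flat R (P i)) ∧ Function.Surjective ε ∧
    Function.Exact ⇑(d 0) ⇑ε ∧ (∀ i, Function.Exact ⇑(d (i+1)) ⇑(d i)) ∧
    (∀ i, m ≤ i → Subsingleton (P i))

lemma st16_homMain (m : ℕ) : ∀ (N : Type) [AddCommGroup N] [Module R N], st16PRes R m N →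
    ∀ (Δ : CochainComplex (ModuleCat.{0} R) ℤ), IsCompleteProjectiveResolution R Δ →
    ∀ (a b c : ℤ), a = b - 1 → c = b + 1 → ∀ (g : Δ.X b →ₗ[R] N),
      g ∘ₗ ((Δ.d a b).hom : Δ.X a →ₗ[R] Δ.X b) = 0 →
      ∃ h : Δ.X c →ₗ[R] N, h ∘ₗ ((Δ.d b c).hom : Δ.X b →ₗ[R] Δ.X c) = g := by
  induction m with
  | zero =>
    rintro N _ _ ⟨P, d, ε, hP, hε, hex0, hexs, hsub⟩ Δ hΔ a b c hab hbc g hg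
    haveI := hsub 0 (le_refl 0)
    haveI : Subsingleton N := hε.subsingleton
    exact ⟨0, by ext x; exact Subsingleton.elim _ _⟩
  | succ m ih =>
    rintro N _ _ ⟨P, d, ε, hP, hε, hex0, hexs, hsub⟩ Δ hΔ a b c hab hbc g hg
    subst hab; subst hbc
    set K := LinearMap.ker ε with hK
    have hKres : st16PRes R m K := by
      refine ⟨fun i => P (i+1), fun i => d (i+1),
        (d 0).codRestrict K (fun x => ?_), fun i => hP (i+1), ?_, ?_,
        fun i => hexs (i+1), fun i hi => hsub (i+1) (by omega)⟩
      · exact LinearMap.mem_ker.mpr (hex0.apply_apply_eq_zero x)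
      · rintro ⟨y, hy⟩
        obtain ⟨x, hx⟩ := (hex0 y).mp (LinearMap.mem_ker.mp hy)
        exact ⟨x, Subtype.ext hx⟩
      · intro y
        constructor
        · intro hy
          have : d 0 y = 0 := congrArg Subtype.val hy
          exact (hexs 0 y).mp this
        · rintro ⟨x, rfl⟩
          exact Subtype.ext ((hexs 0).apply_apply_eq_zero x)
    haveI := hΔ.projective b
    obtain ⟨g', hg'⟩ := Module.projective_lifting_property ε g hε
    have hmem : ∀ x : Δ.X (b-1), g' (((Δ.d (b-1) b).hom : Δ.X (b-1) →ₗ[R] Δ.X b) x) ∈ K := by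
      intro x
      rw [LinearMap.mem_ker]
      have h1 : ε (g' (((Δ.d (b-1) b).hom : Δ.X (b-1) →ₗ[R] Δ.X b) x)) =
          g (((Δ.d (b-1) b).hom : Δ.X (b-1) →ₗ[R] Δ.X b) x) := LinearMap.congr_fun hg' _
      have h2 := LinearMap.congr_fun hg x
      simpa [h1] using h2
    set k : Δ.X (b-1) →ₗ[R] K :=
      (g' ∘ₗ ((Δ.d (b-1) b).hom : Δ.X (b-1) →ₗ[R] Δ.X b)).codRestrict K hmem with hkdef
    have hk0 : k ∘ₗ ((Δ.d (b-1-1) (b-1)).hom : Δ.X (b-1-1) →ₗ[R] Δ.X (b-1)) = 0 := by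
      ext x
      have hz : ((Δ.d (b-1) b).hom : Δ.X (b-1) →ₗ[R] Δ.X b)
          (((Δ.d (b-1-1) (b-1)).hom : Δ.X (b-1-1) →ₗ[R] Δ.X (b-1)) x) = 0 :=
        (st16_exact' hΔ.exact (b-1-1) (b-1) b rfl (by omega)).apply_apply_eq_zero x
      simp [hkdef, LinearMap.codRestrict, hz]
    obtain ⟨h', hh'⟩ := ih K hKres Δ hΔ (b-1-1) (b-1) b rfl (by omega) k hk0
    set g'' : Δ.X b →ₗ[R] (P 0 : Type) := g' - K.subtype ∘ₗ h' with hg''def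
    have hg''0 : g'' ∘ₗ ((Δ.d (b-1) b).hom : Δ.X (b-1) →ₗ[R] Δ.X b) = 0 := by
      ext x
      have h3 : h' (((Δ.d (b-1) b).hom : Δ.X (b-1) →ₗ[R] Δ.X b) x) = k x := LinearMap.congr_fun hh' x
      simp [hg''def, h3, hkdef, LinearMap.codRestrict]
    obtain ⟨h0, hh0⟩ := hΔ.homExact (P 0) (hP 0) b (ModuleCat.ofHom g'') hg''0
    refine ⟨ε ∘ₗ h0, ?_⟩
    ext x
    have h4 : h0 (((Δ.d b (b+1)).hom : Δ.X b →ₗ[R] Δ.X (b+1)) x) = g'' x :=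
      LinearMap.congr_fun hh0 x
    have h5 : ε (g'' x) = g x := by
      have h6 : ε (g' x) = g x := LinearMap.congr_fun hg' x
      have hker : ε ((K.subtype) (h' x)) = 0 := (h' x).2
      simp [hg''def, h6, hker]
    simpa [h4] using h5

lemma st16_tensorMain (m : ℕ) : ∀ (N : Type) [AddCommGroup N] [Module R N], st16FRes R m N →
    ∀ (Ξ : CochainComplex (ModuleCat.{0} R) ℤ), IsCompleteProjectiveResolution R Ξ →
    ∀ (a b c : ℤ), a = b - 1 → c = b + 1 →
      Function.Exact ⇑(LinearMap.lTensor N ((Ξ.d a b).hom : Ξ.X a →ₗ[R] Ξ.X b))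
        ⇑(LinearMap.lTensor N ((Ξ.d b c).hom : Ξ.X b →ₗ[R] Ξ.X c)) := by
  induction m with
  | zero =>
    rintro N _ _ ⟨P, d, ε, hP, hε, hex0, hexs, hsub⟩ Ξ hΞ a b c hab hbc
    haveI := hsub 0 (le_refl 0)
    haveI : Subsingleton N := hε.subsingleton
    have hall : ∀ (X : Type) (_ : AddCommGroup X) (_ : Module R X) (t : N ⊗[R] X), t = 0 := by
      intro X _ _ t
      induction t with
      | zero => rfl
      | tmul n x => rw [Subsingleton.elim n 0, TensorProduct.zero_tmul]
      | add x y hx hy => rw [hx, hy, add_zero]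
    intro y
    constructor
    · intro _; exact ⟨0, by rw [map_zero]; exact (hall _ _ _ y).symm⟩
    · intro _; exact hall _ _ _ _
  | succ m ih =>
    rintro N _ _ ⟨P, d, ε, hP, hε, hex0, hexs, hsub⟩ Ξ hΞ a b c hab hbc
    subst hab; subst hbc
    set K := LinearMap.ker ε with hKdef
    have hKres : st16FRes R m K := by
      refine ⟨fun i => P (i+1), fun i => d (i+1),
        (d 0).codRestrict K (fun x => ?_), fun i => hP (i+1), ?_, ?_,
        fun i => hexs (i+1), fun i hi => hsub (i+1) (by omega)⟩
      · exact LinearMap.mem_ker.mpr (hex0.apply_apply_eq_zero x)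
      · rintro ⟨y, hy⟩
        obtain ⟨x, hx⟩ := (hex0 y).mp (LinearMap.mem_ker.mp hy)
        exact ⟨x, Subtype.ext hx⟩
      · intro y
        constructor
        · intro hy
          have : d 0 y = 0 := congrArg Subtype.val hy
          exact (hexs 0 y).mp this
        · rintro ⟨x, rfl⟩
          exact Subtype.ext ((hexs 0).apply_apply_eq_zero x)
    haveI hF : Module.Flat R (P 0) := hP 0
    haveI : Module.Projective R (Ξ.X (b+1)) := hΞ.projective (b+1)
    haveI : Module.Projective R (Ξ.X (b+1+1)) := hΞ.projective (b+1+1)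
    haveI : Module.Flat R (Ξ.X (b+1)) := inferInstance
    haveI : Module.Flat R (Ξ.X (b+1+1)) := inferInstance
    set dab := ((Ξ.d (b-1) b).hom : Ξ.X (b-1) →ₗ[R] Ξ.X b) with hdab
    set dbc := ((Ξ.d b (b+1)).hom : Ξ.X b →ₗ[R] Ξ.X (b+1)) with hdbc
    set dce := ((Ξ.d (b+1) (b+1+1)).hom : Ξ.X (b+1) →ₗ[R] Ξ.X (b+1+1)) with hdce
    have hdd : dbc ∘ₗ dab = 0 := by
      ext x; exact (st16_exact' hΞ.exact (b-1) b (b+1) rfl rfl).apply_apply_eq_zero x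
    have hdd2 : dce ∘ₗ dbc = 0 := by
      ext x; exact (st16_exact' hΞ.exact b (b+1) (b+1+1) (by omega) rfl).apply_apply_eq_zero x
    intro y
    constructor
    · intro hy
      obtain ⟨w, rfl⟩ := LinearMap.rTensor_surjective (Ξ.X b) hε y
      have hcomm1 : LinearMap.lTensor N dbc ((LinearMap.rTensor (Ξ.X b) ε) w) =
          LinearMap.rTensor (Ξ.X (b+1)) ε ((LinearMap.lTensor (P 0 : Type) dbc) w) := by
        rw [← LinearMap.comp_apply, ← LinearMap.comp_apply,
          LinearMap.lTensor_comp_rTensor, LinearMap.rTensor_comp_lTensor]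
      rw [hcomm1] at hy
      have hses_c : Function.Exact
          ⇑(LinearMap.rTensor (Ξ.X (b+1)) K.subtype) ⇑(LinearMap.rTensor (Ξ.X (b+1)) ε) :=
        rTensor_exact (Ξ.X (b+1)) (LinearMap.exact_subtype_ker_map ε) hε
      obtain ⟨z, hz⟩ := (hses_c _).mp hy
      have hz2 : LinearMap.lTensor (K : Type) dce z = 0 := by
        apply Module.Flat.rTensor_preserves_injective_linearMap
          (M := Ξ.X (b+1+1)) K.subtype K.injective_subtype
        rw [map_zero]
        have hcomm2 : LinearMap.rTensor (Ξ.X (b+1+1)) K.subtype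
            (LinearMap.lTensor (K : Type) dce z) =
            LinearMap.lTensor (P 0 : Type) dce
              (LinearMap.rTensor (Ξ.X (b+1)) K.subtype z) := by
          rw [← LinearMap.comp_apply, ← LinearMap.comp_apply,
            LinearMap.rTensor_comp_lTensor, LinearMap.lTensor_comp_rTensor]
        rw [hcomm2, hz, ← LinearMap.comp_apply, ← LinearMap.lTensor_comp, hdd2,
          LinearMap.lTensor_zero, LinearMap.zero_apply]
      obtain ⟨v, hv⟩ := (ih K hKres Ξ hΞ b (b+1) (b+1+1) (by omega) rfl z).mp hz2
      set u := LinearMap.rTensor (Ξ.X b) K.subtype v with hudef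
      have hwu : LinearMap.lTensor (P 0 : Type) dbc (w - u) = 0 := by
        have hcomm3 : LinearMap.lTensor (P 0 : Type) dbc u =
            LinearMap.rTensor (Ξ.X (b+1)) K.subtype (LinearMap.lTensor (K : Type) dbc v) := by
          rw [hudef, ← LinearMap.comp_apply, ← LinearMap.comp_apply,
            LinearMap.lTensor_comp_rTensor, LinearMap.rTensor_comp_lTensor]
        rw [map_sub, hcomm3, hv, hz, sub_self]
      obtain ⟨t, ht⟩ := (Module.Flat.lTensor_exact (M := (P 0 : Type))
        (st16_exact' hΞ.exact (b-1) b (b+1) rfl rfl) (w - u)).mp hwu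
      refine ⟨LinearMap.rTensor (Ξ.X (b-1)) ε t, ?_⟩
      have hcomm4 : LinearMap.lTensor N dab (LinearMap.rTensor (Ξ.X (b-1)) ε t) =
          LinearMap.rTensor (Ξ.X b) ε (LinearMap.lTensor (P 0 : Type) dab t) := by
        rw [← LinearMap.comp_apply, ← LinearMap.comp_apply,
          LinearMap.lTensor_comp_rTensor, LinearMap.rTensor_comp_lTensor]
      rw [hcomm4, ht, map_sub]
      have hεu : LinearMap.rTensor (Ξ.X b) ε u = 0 := by
        rw [hudef, ← LinearMap.comp_apply, ← LinearMap.rTensor_comp]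
        have hc : ε ∘ₗ K.subtype = 0 := by ext x; exact x.2
        rw [hc, LinearMap.rTensor_zero, LinearMap.zero_apply]
      rw [hεu, sub_zero]
    · rintro ⟨x, rfl⟩
      rw [← LinearMap.comp_apply, ← LinearMap.lTensor_comp, hdd,
        LinearMap.lTensor_zero, LinearMap.zero_apply]

/-- Exactness of `mapRange` on finsupps. -/
lemma st16_exact_mapRange {A B C' : Type} [AddCommGroup A] [Module R A]
    [AddCommGroup B] [Module R B] [AddCommGroup C'] [Module R C']
    (f : A →ₗ[R] B) (g : B →ₗ[R] C') (h : Function.Exact f g) (ι : Type) :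
    Function.Exact ⇑(Finsupp.mapRange.linearMap (α := ι) f)
      ⇑(Finsupp.mapRange.linearMap (α := ι) g) := by
  classical
  intro y
  constructor
  · intro hy
    have hy' : ∀ j, g (y j) = 0 := by
      intro j
      have := DFunLike.congr_fun hy j
      change (Finsupp.mapRange g (map_zero g) y) j = 0 at this
      simpa [Finsupp.mapRange.linearMap, LinearMap.coe_mk, AddHom.coe_mk] using this
    set u : ι → A := fun j =>
      if hj : y j = 0 then 0 else Classical.choose ((h (y j)).mp (hy' j)) with hudef
    have hu : ∀ j, f (u j) = y j := by
      intro j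
      by_cases hj : y j = 0
      · simp [hudef, hj]
      · simpa [hudef, hj] using Classical.choose_spec ((h (y j)).mp (hy' j))
    refine ⟨Finsupp.onFinset y.support u (fun j hj => ?_), ?_⟩
    · rw [Finsupp.mem_support_iff]
      intro h0
      exact hj (by simp [hudef, h0])
    · ext j
      change Finsupp.mapRange f (map_zero f) _ j = y j
      simp [Finsupp.mapRange.linearMap, LinearMap.coe_mk, AddHom.coe_mk, Finsupp.mapRange_apply, hu j]
  · rintro ⟨x, rfl⟩
    ext j
    simp [Finsupp.mapRange.linearMap, LinearMap.coe_mk, AddHom.coe_mk, Finsupp.mapRange_apply]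
    exact h.apply_apply_eq_zero (x j)

lemma st16_pres_finsupp {m : ℕ} {N : Type} [AddCommGroup N] [Module R N]
    (h : st16PRes R m N) (ι : Type) : st16PRes R m (ι →₀ N) := by
  classical
  obtain ⟨P, d, ε, hP, hε, hex0, hexs, hsub⟩ := h
  refine ⟨fun i => ModuleCat.of R (ι →₀ (P i : Type)),
    fun i => Finsupp.mapRange.linearMap (d i), Finsupp.mapRange.linearMap ε,
    fun i => ?_, ?_, ?_, fun i => ?_, fun i hi => ?_⟩
  · haveI := hP i
    exact Module.Projective.of_equiv (finsuppLequivDFinsupp (M := (P i : Type)) R).symm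
  · intro y
    obtain ⟨x, hx⟩ := Finsupp.mapRange_surjective ⇑ε (map_zero ε) hε y
    exact ⟨x, hx⟩
  · exact st16_exact_mapRange (d 0) ε hex0 ι
  · exact st16_exact_mapRange (d (i+1)) (d i) (hexs i) ι
  · haveI := hsub i hi
    exact ⟨fun x y => Finsupp.ext fun a => Subsingleton.elim _ _⟩

end Aux
/-- If `M` has finite flat dimension (as a right `R`-module) and finite projective dimension
(as a left `R`-module), then `Hom_R(-, L)` preserves exactness of complete projective
resolutions for every `L ∈ Add(M)`, and `M ⊗_R -` preserves exactness of complete projective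
resolutions; in particular `M` is a generalized compatible `R`-`R`-bimodule. -/
theorem stmt_16 (R M : Type) [CommRing R] [AddCommGroup M] [Module R M]
    (hflat : HasFiniteFlatDimension R M) (hproj : HasFiniteProjectiveDimension R M) :
    (∀ Δ : CochainComplex (ModuleCat.{0} R) ℤ, IsCompleteProjectiveResolution R Δ →
      ∀ (L : Type) [AddCommGroup L] [Module R L], MemAdd R M L →
        ∀ (n : ℤ) (g : Δ.X n →ₗ[R] L),
          g ∘ₗ ((Δ.d (n-1) n).hom : Δ.X (n-1) →ₗ[R] Δ.X n) = 0 →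
            ∃ h : Δ.X (n+1) →ₗ[R] L,
              h ∘ₗ ((Δ.d n (n+1)).hom : Δ.X n →ₗ[R] Δ.X (n+1)) = g) ∧
    (∀ Ξ : CochainComplex (ModuleCat.{0} R) ℤ, IsCompleteProjectiveResolution R Ξ →
      ∀ n : ℤ, Function.Exact
        ⇑(LinearMap.lTensor M ((Ξ.d (n-1) n).hom : Ξ.X (n-1) →ₗ[R] Ξ.X n))
        ⇑(LinearMap.lTensor M ((Ξ.d n (n+1)).hom : Ξ.X n →ₗ[R] Ξ.X (n+1)))) ∧
    IsGenCompatible R R M := by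
  obtain ⟨np, Pp, dp, εp, hPp, hεp, hexp0, hexps, hsubp⟩ := hproj
  obtain ⟨nf, Pf, df, εf, hPf, hεf, hexf0, hexfs, hsubf⟩ := hflat
  have hPRes : st16PRes R np M := ⟨Pp, fun i => (dp i).hom, εp.hom, hPp, hεp, hexp0, hexps, hsubp⟩
  have hFRes : st16FRes R nf M := ⟨Pf, fun i => (df i).hom, εf.hom, hPf, hεf, hexf0, hexfs, hsubf⟩
  have homPart : ∀ Δ : CochainComplex (ModuleCat.{0} R) ℤ,
      IsCompleteProjectiveResolution R Δ →
      ∀ (L : Type) [AddCommGroup L] [Module R L], MemAdd R M L →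
        ∀ (n : ℤ) (g : Δ.X n →ₗ[R] L),
          g ∘ₗ ((Δ.d (n-1) n).hom : Δ.X (n-1) →ₗ[R] Δ.X n) = 0 →
            ∃ h : Δ.X (n+1) →ₗ[R] L,
              h ∘ₗ ((Δ.d n (n+1)).hom : Δ.X n →ₗ[R] Δ.X (n+1)) = g := by
    rintro Δ hΔ L _ _ ⟨ι, i, p, hpi⟩ n g hg
    have hres := st16_pres_finsupp hPRes ι
    have hig : (i ∘ₗ g) ∘ₗ ((Δ.d (n-1) n).hom : Δ.X (n-1) →ₗ[R] Δ.X n) = 0 := by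
      rw [LinearMap.comp_assoc, hg, LinearMap.comp_zero]
    obtain ⟨h, hh⟩ := st16_homMain np (ι →₀ M) hres Δ hΔ (n-1) n (n+1) rfl rfl (i ∘ₗ g) hig
    refine ⟨p ∘ₗ h, ?_⟩
    rw [LinearMap.comp_assoc, hh, ← LinearMap.comp_assoc, hpi, LinearMap.id_comp]
  have tenPart : ∀ Ξ : CochainComplex (ModuleCat.{0} R) ℤ,
      IsCompleteProjectiveResolution R Ξ →
      ∀ n : ℤ, Function.Exact
        ⇑(LinearMap.lTensor M ((Ξ.d (n-1) n).hom : Ξ.X (n-1) →ₗ[R] Ξ.X n))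
        ⇑(LinearMap.lTensor M ((Ξ.d n (n+1)).hom : Ξ.X n →ₗ[R] Ξ.X (n+1))) :=
    fun Ξ hΞ n => st16_tensorMain nf M hFRes Ξ hΞ (n-1) n (n+1) rfl rfl
  exact ⟨homPart, tenPart, tenPart, homPart⟩
end
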